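/- Let r ≥ 5, let ℓ ≥ 0, and let I = {i_1 < i_2 < ⋯ < i_ℓ} be a set of nonconsecutive integers with 1 < i_1 and i_ℓ < r−2, and let c_{i_1},…,c_{i_ℓ} be positive integers with m = Σ_{j=1}^ℓ c_{i_j}. Let λ ∈ ℕ^r have i_j-th coordinate 1 + c_{i_j} for each j and all other coordinates 1, and write N_k = N_k(λ) and T = Σ_{k≥0} N_k. Then the mean and variance of the number of parts are: (Σ_{k≥0} k·N_k)/T = (r+1)/2 − ℓ/5 + m, and (Σ_{k≥0} k²·N_k)/T − ((Σ_{k≥0} k·N_k)/T)² = (r−1)/4 + 3ℓ/50 (identities of rational numbers). -/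

import Mathlib

open Polynomial

/-- The positive roots of the Lie algebra of type `A_r` in simple-root coordinates:
the indicator vectors `α[i,j]` of the intervals `[i,j]` for `1 ≤ i ≤ j ≤ r`
(positions are `1`-based, so position `i` corresponds to `t : Fin r` with `t.val + 1 = i`). -/
def isPosRootA (r : ℕ) (v : Fin r → ℕ) : Prop :=
  ∃ i j : ℕ, 1 ≤ i ∧ i ≤ j ∧ j ≤ r ∧
    v = fun t => if i ≤ t.val + 1 ∧ t.val + 1 ≤ j then 1 else 0

/-- `NA r k ξ` is the number of decompositions of the weight `ξ` as a sum of exactly `k`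
positive roots of `A_r`, i.e. the number of `ℕ`-valued functions (with finite support)
on the set of positive roots whose values sum to `k` and whose weighted vector sum is `ξ`. -/
noncomputable def NA (r k : ℕ) (ξ : Fin r → ℕ) : ℕ :=
  Set.ncard {m : (Fin r → ℕ) →₀ ℕ |
    (∀ v ∈ m.support, isPosRootA r v) ∧
    (m.sum fun _ n => n) = k ∧
    (m.sum fun v n => n • v) = ξ}

set_option linter.unusedSectionVars false
set_option linter.unusedTactic false
set_option maxHeartbeats 1000000

namespace Prop36

attribute [local instance] Classical.propDecidable

open Finset

/-! ### Basic definitions -/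

/-- 1-based pairs `(a,b)` with `1 ≤ a ≤ b ≤ r` indexing positive roots. -/
def pairsF (r : ℕ) : Finset (ℕ × ℕ) :=
  (Finset.Icc 1 r ×ˢ Finset.Icc 1 r).filter fun q => q.1 ≤ q.2

/-- The root vector of a pair. -/
def rootv (r : ℕ) (q : ℕ × ℕ) : Fin r → ℕ :=
  fun t => if q.1 ≤ t.val + 1 ∧ t.val + 1 ≤ q.2 then 1 else 0

/-- indicator that the interval `q` covers position `p`. -/
def indq (q : ℕ × ℕ) (p : ℕ) : ℕ := if q.1 ≤ p ∧ p ≤ q.2 then 1 else 0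

/-- generic gaps: gap `g` (between positions `g` and `g+1`) not adjacent to `I`. -/
def gapsF (r : ℕ) (I : Finset ℕ) : Finset ℕ :=
  (Finset.Icc 1 (r-1)).filter fun g => g ∉ I ∧ g + 1 ∉ I

/-- configuration space -/
abbrev Cfg (r : ℕ) (I : Finset ℕ) : Type := (↥(gapsF r I) → Bool) × (↥I → Fin 5)

/-- state decodes: state 0 = cut on both sides; 1 = cut left only; 2 = cut right only;
3 = no cuts, no split (a root passes through); 4 = no cuts, split. -/
def stCutL (s : Fin 5) : Prop := s.val = 0 ∨ s.val = 1
def stCutR (s : Fin 5) : Prop := s.val = 0 ∨ s.val = 2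
def stSplit (s : Fin 5) : Prop := s.val = 4
def stW (s : Fin 5) : ℕ := if s.val = 0 then 2 else if s.val = 1 ∨ s.val = 2 then 1 else 0

variable (r : ℕ) (I : Finset ℕ) (c : ℕ → ℕ)

/-- there is a cut at gap `g` (between positions `g` and `g+1`), `1 ≤ g ≤ r-1`. -/
def cutC (cfg : Cfg r I) (g : ℕ) : Prop :=
  (∃ i : ↥I, (i : ℕ) = g ∧ stCutR (cfg.2 i)) ∨
  (∃ i : ↥I, (i : ℕ) = g + 1 ∧ stCutL (cfg.2 i)) ∨
  (∃ γ : ↥(gapsF r I), (γ : ℕ) = g ∧ cfg.1 γ = true)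

/-- there is a split at position `p`. -/
def splC (cfg : Cfg r I) (p : ℕ) : Prop := ∃ i : ↥I, (i : ℕ) = p ∧ stSplit (cfg.2 i)

def startC (cfg : Cfg r I) (a : ℕ) : Prop := a = 1 ∨ cutC r I cfg (a-1) ∨ splC r I cfg a

def endC (cfg : Cfg r I) (b : ℕ) : Prop := b = r ∨ cutC r I cfg b ∨ splC r I cfg b

/-- `(a,b)` is a base interval of the configuration. -/
def baseC (cfg : Cfg r I) (a b : ℕ) : Prop :=
  1 ≤ a ∧ a ≤ b ∧ b ≤ r ∧ startC r I cfg a ∧ endC r I cfg b ∧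
  (∀ g, a ≤ g → g < b → ¬ cutC r I cfg g) ∧
  (∀ x, a < x → x < b → ¬ splC r I cfg x) ∧
  (a = b → ¬ splC r I cfg a)

/-- multiplicity of the root `q` in the decomposition associated to a configuration. -/
noncomputable def nuC (cfg : Cfg r I) (q : ℕ × ℕ) : ℕ :=
  (if q.1 = q.2 ∧ q.1 ∈ I then c q.1 - (if splC r I cfg q.1 then 1 else 0) else 0) +
  (if baseC r I cfg q.1 q.2 then 1 else 0)

/-- the decomposition associated to a configuration. -/
noncomputable def psiC (cfg : Cfg r I) : (Fin r → ℕ) →₀ ℕ :=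
  ∑ q ∈ pairsF r, Finsupp.single (rootv r q) (nuC r I c cfg q)

/-- number of parts statistic of a configuration. -/
def statC (M : ℕ) (cfg : Cfg r I) : ℕ :=
  1 + M + (∑ γ : ↥(gapsF r I), if cfg.1 γ = true then 1 else 0) + ∑ i : ↥I, stW (cfg.2 i)

/-! ### decomposition side -/

/-- multiplicity of root `q` in a decomposition `m`. -/
def muF (m : (Fin r → ℕ) →₀ ℕ) (q : ℕ × ℕ) : ℕ := m (rootv r q)

/-- parts of `m` covering position `p`. -/
def covF (p : ℕ) : Finset (ℕ × ℕ) := (pairsF r).filter fun q => q.1 ≤ p ∧ p ≤ q.2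

/-- parts covering the gap `g` (i.e. covering both `g` and `g+1`). -/
def covG (g : ℕ) : Finset (ℕ × ℕ) := (pairsF r).filter fun q => q.1 ≤ g ∧ g + 1 ≤ q.2

/-- "through" parts at `i`: covering both `i-1` and `i+1`. -/
def covT (i : ℕ) : Finset (ℕ × ℕ) := (pairsF r).filter fun q => q.1 ≤ i - 1 ∧ i + 1 ≤ q.2

/-- the decomposition `m` has a cut at gap `g`: no part covers both `g` and `g+1`. -/
def cutM (m : (Fin r → ℕ) →₀ ℕ) (g : ℕ) : Prop := ∀ q ∈ covG r g, muF r m q = 0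

def endM (m : (Fin r → ℕ) →₀ ℕ) (p : ℕ) : Prop :=
  ∃ q ∈ pairsF r, muF r m q ≠ 0 ∧ q.2 = p ∧ q.1 < p

def startM (m : (Fin r → ℕ) →₀ ℕ) (p : ℕ) : Prop :=
  ∃ q ∈ pairsF r, muF r m q ≠ 0 ∧ q.1 = p ∧ p < q.2

def splitM (m : (Fin r → ℕ) →₀ ℕ) (p : ℕ) : Prop := endM r m p ∧ startM r m p

noncomputable def encSt (l rr sp : Prop) : Fin 5 :=
  if l then (if rr then 0 else 1) else if rr then 2 else if sp then 4 else 3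

/-- configuration extracted from a decomposition. -/
noncomputable def phiC (m : (Fin r → ℕ) →₀ ℕ) : Cfg r I :=
  (fun γ => if cutM r m (γ : ℕ) then true else false,
   fun i => encSt (cutM r m ((i : ℕ) - 1)) (cutM r m (i : ℕ)) (splitM r m (i : ℕ)))

/-- 1-based coordinates of the weight λ. -/
def lamv (p : ℕ) : ℕ := if p ∈ I then 1 + c p else 1

/-- the set of decompositions of λ. -/
def Sset (lam : Fin r → ℕ) : Set ((Fin r → ℕ) →₀ ℕ) :=
  {m | (∀ v ∈ m.support, isPosRootA r v) ∧ (m.sum fun v n => n • v) = lam}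

/-- number of parts. -/
def sizeF (m : (Fin r → ℕ) →₀ ℕ) : ℕ := m.sum fun _ n => n


/-! ### Basic lemmas -/

variable {r : ℕ} {I : Finset ℕ} {c : ℕ → ℕ}

lemma mem_pairsF {q : ℕ × ℕ} : q ∈ pairsF r ↔ 1 ≤ q.1 ∧ q.1 ≤ q.2 ∧ q.2 ≤ r := by
  simp only [pairsF, Finset.mem_filter, Finset.mem_product, Finset.mem_Icc]
  omega

lemma rootv_apply (q : ℕ × ℕ) (t : Fin r) : rootv r q t = indq q (t.val + 1) := rfl

lemma rootv_apply' (q : ℕ × ℕ) {p : ℕ} (h1 : 1 ≤ p) (h2 : p ≤ r) :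
    rootv r q ⟨p - 1, by omega⟩ = indq q p := by
  have hv : ((⟨p - 1, by omega⟩ : Fin r)).val + 1 = p := by
    simp only [Fin.val_mk]; omega
  rw [rootv_apply, hv]

lemma indq_eq_one {q : ℕ × ℕ} {p : ℕ} (h1 : q.1 ≤ p) (h2 : p ≤ q.2) : indq q p = 1 := by
  simp [indq, h1, h2]

lemma rootv_inj {q q' : ℕ × ℕ} (hq : q ∈ pairsF r) (hq' : q' ∈ pairsF r)
    (h : rootv r q = rootv r q') : q = q' := by
  rw [mem_pairsF] at hq hq'
  have key : ∀ p, 1 ≤ p → p ≤ r → (q.1 ≤ p ∧ p ≤ q.2 ↔ q'.1 ≤ p ∧ p ≤ q'.2) := by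
    intro p h1 h2
    have e1 : indq q p = indq q' p := by
      rw [← rootv_apply' q h1 h2, ← rootv_apply' q' h1 h2, h]
    constructor
    · intro hh
      by_contra hcon
      rw [indq_eq_one hh.1 hh.2, indq, if_neg hcon] at e1
      exact one_ne_zero e1
    · intro hh
      by_contra hcon
      rw [indq_eq_one hh.1 hh.2, indq, if_neg hcon] at e1
      exact one_ne_zero e1.symm
  have k1 := (key q.1 hq.1 (hq.2.1.trans hq.2.2)).1 ⟨le_rfl, hq.2.1⟩
  have k2 := (key q.2 (hq.1.trans hq.2.1) hq.2.2).1 ⟨hq.2.1, le_rfl⟩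
  have k3 := (key q'.1 hq'.1 (hq'.2.1.trans hq'.2.2)).2 ⟨le_rfl, hq'.2.1⟩
  have k4 := (key q'.2 (hq'.1.trans hq'.2.1) hq'.2.2).2 ⟨hq'.2.1, le_rfl⟩
  have hh : q.1 = q'.1 ∧ q.2 = q'.2 := by omega
  exact Prod.ext hh.1 hh.2

lemma isPosRootA_iff {v : Fin r → ℕ} : isPosRootA r v ↔ ∃ q ∈ pairsF r, v = rootv r q := by
  constructor
  · rintro ⟨i, j, h1, h2, h3, h4⟩
    exact ⟨(i, j), mem_pairsF.2 ⟨h1, h2, h3⟩, h4⟩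
  · rintro ⟨q, hq, hv⟩
    rw [mem_pairsF] at hq
    exact ⟨q.1, q.2, hq.1, hq.2.1, hq.2.2, hv⟩

/-- helper: a sum of naturals equal to 1 -/
lemma sum_eq_one_exists {α : Type*} {s : Finset α} {g : α → ℕ} (h : ∑ x ∈ s, g x = 1) :
    ∃ x ∈ s, g x ≠ 0 := by
  by_contra hc
  push_neg at hc
  rw [Finset.sum_eq_zero (fun x hx => hc x hx)] at h
  omega

lemma sum_eq_one_unique {α : Type*} {s : Finset α} {g : α → ℕ} (h : ∑ x ∈ s, g x = 1)
    {x y : α} (hx : x ∈ s) (hy : y ∈ s) (hgx : g x ≠ 0) (hgy : g y ≠ 0) : x = y := by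
  by_contra hne
  have hsub : ({x, y} : Finset α) ⊆ s := by
    intro z hz
    rcases Finset.mem_insert.1 hz with rfl | hz
    · exact hx
    · rw [Finset.mem_singleton] at hz; subst hz; exact hy
  have := Finset.sum_le_sum_of_subset hsub (f := g)
  rw [Finset.sum_pair hne, h] at this
  omega

lemma le_sum_of_mem {α : Type*} {s : Finset α} {g : α → ℕ} {x : α} (hx : x ∈ s) :
    g x ≤ ∑ y ∈ s, g y :=
  Finset.single_le_sum (fun _ _ => Nat.zero_le _) hx

/-- generic transfer of `Finsupp.sum` to a sum over pairs. -/
lemma finsupp_sum_pairs {M : Type*} [AddCommMonoid M] (m : (Fin r → ℕ) →₀ ℕ)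
    (hm : ∀ v ∈ m.support, isPosRootA r v) (F : (Fin r → ℕ) → ℕ → M)
    (hF : ∀ v, F v 0 = 0) :
    m.sum F = ∑ q ∈ pairsF r, F (rootv r q) (muF r m q) := by
  have hsub : m.support ⊆ (pairsF r).image (rootv r) := by
    intro v hv
    obtain ⟨q, hq, hvq⟩ := isPosRootA_iff.1 (hm v hv)
    exact Finset.mem_image.2 ⟨q, hq, hvq.symm⟩
  rw [Finsupp.sum]
  rw [Finset.sum_subset hsub (fun v _ hv => by
    rw [Finsupp.notMem_support_iff.1 hv, hF])]
  rw [Finset.sum_image (fun x hx y hy hxy => rootv_inj hx hy hxy)]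
  rfl

lemma size_eq_sum_pairs (m : (Fin r → ℕ) →₀ ℕ)
    (hm : ∀ v ∈ m.support, isPosRootA r v) :
    sizeF r m = ∑ q ∈ pairsF r, muF r m q :=
  finsupp_sum_pairs m hm (fun _ n => n) (fun _ => rfl)

lemma cov_lemma {lam : Fin r → ℕ} {m : (Fin r → ℕ) →₀ ℕ} (hm : m ∈ Sset r lam) (t : Fin r) :
    ∑ q ∈ covF r (t.val + 1), muF r m q = lam t := by
  have h2 := congrFun hm.2 t
  rw [show (m.sum fun v n => n • v) t = m.sum fun v n => n * v t by
    rw [Finsupp.sum, Finsupp.sum, Finset.sum_apply]; rfl] at h2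
  rw [finsupp_sum_pairs m hm.1 (fun v n => n * v t) (fun v => by simp)] at h2
  rw [← h2]
  rw [covF, Finset.sum_filter]
  apply Finset.sum_congr rfl
  intro q _
  rw [rootv_apply, indq]
  split_ifs <;> simp

lemma cov_lemma' {lam : Fin r → ℕ} {m : (Fin r → ℕ) →₀ ℕ} (hm : m ∈ Sset r lam)
    (hlam : ∀ t : Fin r, lam t = lamv I c (t.val + 1)) {p : ℕ} (h1 : 1 ≤ p) (h2 : p ≤ r) :
    ∑ q ∈ covF r p, muF r m q = lamv I c p := by
  have := cov_lemma hm ⟨p - 1, by omega⟩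
  rw [hlam] at this
  simpa [show p - 1 + 1 = p by omega] using this


/-! ### hypotheses-dependent basics, finiteness, tsum reduction -/

section Hyps

variable (hr : 5 ≤ r) (hI : ∀ i ∈ I, 1 < i ∧ i < r - 2)
variable (hnc : ∀ i ∈ I, ∀ j ∈ I, i < j → i + 2 ≤ j) (hc : ∀ i ∈ I, 1 ≤ c i)

include hr hI in
lemma Imem {i : ℕ} (hi : i ∈ I) : 2 ≤ i ∧ i + 3 ≤ r := by
  have := hI i hi; omega

include hnc in
lemma adjI {i : ℕ} (hi : i ∈ I) (hi1 : i + 1 ∈ I) : False := by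
  have := hnc i hi (i + 1) hi1 (by omega); omega

lemma lamv_le (p : ℕ) : lamv I c p ≤ 1 + ∑ i ∈ I, c i := by
  rw [lamv]
  split_ifs with h
  · have : c p ≤ ∑ i ∈ I, c i := le_sum_of_mem h
    omega
  · omega

variable {lam : Fin r → ℕ}

lemma mu_le {m : (Fin r → ℕ) →₀ ℕ} (hm : m ∈ Sset r lam)
    (hlam : ∀ t : Fin r, lam t = lamv I c (t.val + 1)) {q : ℕ × ℕ} (hq : q ∈ pairsF r) :
    muF r m q ≤ 1 + ∑ i ∈ I, c i := by
  rw [mem_pairsF] at hq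
  have hcov : q ∈ covF r q.1 := by
    rw [covF, Finset.mem_filter, mem_pairsF]
    exact ⟨⟨hq.1, hq.2.1, hq.2.2⟩, le_rfl, hq.2.1⟩
  calc muF r m q ≤ ∑ q' ∈ covF r q.1, muF r m q' := le_sum_of_mem hcov
    _ = lamv I c q.1 := cov_lemma' hm hlam hq.1 (hq.2.1.trans hq.2.2)
    _ ≤ 1 + ∑ i ∈ I, c i := lamv_le q.1

lemma Sset_finite (hlam : ∀ t : Fin r, lam t = lamv I c (t.val + 1)) :
    (Sset r lam).Finite := by
  classical
  set B := 1 + ∑ i ∈ I, c i with hB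
  set gB : (Fin r → ℕ) →₀ ℕ :=
    Finsupp.indicator ((pairsF r).image (rootv r)) (fun _ _ => B) with hgB
  apply Set.Finite.subset (Finset.finite_toSet (Finset.Iic gB))
  intro m hm
  rw [Finset.mem_coe, Finset.mem_Iic, Finsupp.le_def]
  intro v
  by_cases hv : v ∈ m.support
  · obtain ⟨q, hq, hvq⟩ := isPosRootA_iff.1 (hm.1 v hv)
    have h1 : gB v = B := by
      rw [hgB, Finsupp.indicator_of_mem (Finset.mem_image.2 ⟨q, hq, hvq.symm⟩)]
    rw [h1, hvq]
    exact mu_le hm hlam hq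
  · rw [Finsupp.notMem_support_iff.1 hv]
    exact Nat.zero_le _

include hr hI in
lemma sum_lamv : ∑ p ∈ Finset.Icc 1 r, lamv I c p = r + ∑ i ∈ I, c i := by
  have hfil : (Finset.Icc 1 r).filter (fun p => p ∈ I) = I := by
    ext p
    simp only [Finset.mem_filter, Finset.mem_Icc]
    constructor
    · tauto
    · intro hp
      have := Imem hr hI hp
      exact ⟨by omega, hp⟩
  calc ∑ p ∈ Finset.Icc 1 r, lamv I c p
      = ∑ p ∈ Finset.Icc 1 r, (1 + if p ∈ I then c p else 0) := by
        apply Finset.sum_congr rfl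
        intro p _
        rw [lamv]
        split_ifs <;> omega
    _ = ∑ p ∈ Finset.Icc 1 r, 1 + ∑ p ∈ Finset.Icc 1 r, (if p ∈ I then c p else 0) :=
        Finset.sum_add_distrib
    _ = r + ∑ i ∈ I, c i := by
        rw [← Finset.sum_filter, hfil, Finset.sum_const, Nat.card_Icc, smul_eq_mul]
        omega

include hr hI in
lemma size_le {m : (Fin r → ℕ) →₀ ℕ} (hm : m ∈ Sset r lam)
    (hlam : ∀ t : Fin r, lam t = lamv I c (t.val + 1)) :
    sizeF r m ≤ r + ∑ i ∈ I, c i := by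
  rw [size_eq_sum_pairs m hm.1]
  have key : ∑ p ∈ Finset.Icc 1 r, ∑ q ∈ covF r p, muF r m q
      = ∑ q ∈ pairsF r, ∑ p ∈ Finset.Icc 1 r, if q.1 ≤ p ∧ p ≤ q.2 then muF r m q else 0 := by
    rw [Finset.sum_comm]
    apply Finset.sum_congr rfl
    intro p _
    rw [covF, Finset.sum_filter]
  have hle : ∑ q ∈ pairsF r, muF r m q
      ≤ ∑ p ∈ Finset.Icc 1 r, ∑ q ∈ covF r p, muF r m q := by
    rw [key]
    apply Finset.sum_le_sum
    intro q hq
    rw [mem_pairsF] at hq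
    have hmem : q.1 ∈ Finset.Icc 1 r := Finset.mem_Icc.2 ⟨hq.1, hq.2.1.trans hq.2.2⟩
    have : (if q.1 ≤ q.1 ∧ q.1 ≤ q.2 then muF r m q else 0)
        ≤ ∑ p ∈ Finset.Icc 1 r, if q.1 ≤ p ∧ p ≤ q.2 then muF r m q else 0 :=
      Finset.single_le_sum (f := fun p => if q.1 ≤ p ∧ p ≤ q.2 then muF r m q else 0)
        (fun _ _ => Nat.zero_le _) hmem
    simpa [hq.2.1] using this
  have hcov : ∑ p ∈ Finset.Icc 1 r, ∑ q ∈ covF r p, muF r m q = r + ∑ i ∈ I, c i := by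
    rw [← sum_lamv hr hI (c := c)]
    apply Finset.sum_congr rfl
    intro p hp
    rw [Finset.mem_Icc] at hp
    exact cov_lemma' hm hlam hp.1 hp.2
  omega

lemma NA_eq_card (hfin : (Sset r lam).Finite) (k : ℕ) :
    NA r k lam = (hfin.toFinset.filter (fun m => sizeF r m = k)).card := by
  rw [NA, ← Set.ncard_coe_finset]
  congr 1
  ext m
  rw [Finset.mem_coe, Finset.mem_filter, Set.Finite.mem_toFinset]
  simp only [Set.mem_setOf_eq, Finset.coe_filter, Set.Finite.mem_toFinset, Sset,
    Set.mem_setOf_eq, sizeF]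
  tauto

include hr hI in
lemma tsum_moment (hfin : (Sset r lam).Finite)
    (hlam : ∀ t : Fin r, lam t = lamv I c (t.val + 1)) (f : ℕ → ℚ) :
    ∑' k : ℕ, f k * (NA r k lam : ℚ) = ∑ m ∈ hfin.toFinset, f (sizeF r m) := by
  classical
  set K := r + ∑ i ∈ I, c i + 1 with hK
  rw [tsum_eq_sum (s := Finset.range K) (f := fun k => f k * (NA r k lam : ℚ))]
  · have hmaps : ∀ m ∈ hfin.toFinset, sizeF r m ∈ Finset.range K := by
      intro m hm
      rw [Set.Finite.mem_toFinset] at hm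
      rw [Finset.mem_range]
      have := size_le hr hI hm hlam
      omega
    rw [← Finset.sum_fiberwise_of_maps_to hmaps (fun m => f (sizeF r m))]
    apply Finset.sum_congr rfl
    intro k _
    rw [NA_eq_card hfin k, Finset.sum_congr rfl
      (fun m hm => by rw [(Finset.mem_filter.1 hm).2]), Finset.sum_const]
    push_cast
    ring
  · intro k hk
    rw [Finset.mem_range, not_lt] at hk
    have : NA r k lam = 0 := by
      rw [NA_eq_card hfin k, Finset.card_eq_zero, Finset.filter_eq_empty_iff]
      intro m hm
      rw [Set.Finite.mem_toFinset] at hm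
      have := size_le hr hI hm hlam
      omega
    rw [this]
    push_cast
    ring

end Hyps


/-! ### configuration-side structure -/

section CfgSide

variable (hr : 5 ≤ r) (hI : ∀ i ∈ I, 1 < i ∧ i < r - 2)
variable (hnc : ∀ i ∈ I, ∀ j ∈ I, i < j → i + 2 ≤ j)
variable {cfg : Cfg r I}

lemma splC_mem {p : ℕ} (h : splC r I cfg p) : p ∈ I := by
  obtain ⟨i, hip, _⟩ := h
  rw [← hip]; exact i.2

lemma splC_iff {i : ℕ} (hi : i ∈ I) : splC r I cfg i ↔ stSplit (cfg.2 ⟨i, hi⟩) := by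
  constructor
  · rintro ⟨i', hi', hs⟩
    have : i' = ⟨i, hi⟩ := Subtype.ext hi'
    rwa [this] at hs
  · intro h
    exact ⟨⟨i, hi⟩, rfl, h⟩

lemma gap_prop (γ : ↥(gapsF r I)) :
    1 ≤ (γ:ℕ) ∧ (γ:ℕ) ≤ r - 1 ∧ (γ:ℕ) ∉ I ∧ (γ:ℕ) + 1 ∉ I := by
  have := γ.2
  simp only [gapsF, Finset.mem_filter, Finset.mem_Icc] at this
  tauto

include hr hI in
lemma cutC_range {g : ℕ} (h : cutC r I cfg g) : 1 ≤ g ∧ g + 1 ≤ r := by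
  rcases h with ⟨i, hig, _⟩ | ⟨i, hig, _⟩ | ⟨γ, hig, _⟩
  · have := Imem hr hI i.2; omega
  · have := Imem hr hI i.2; omega
  · have := gap_prop γ; omega

include hr hI hnc in
lemma cutC_at_I {i : ℕ} (hi : i ∈ I) : cutC r I cfg i ↔ stCutR (cfg.2 ⟨i, hi⟩) := by
  constructor
  · rintro (⟨i', hi', hs⟩ | ⟨i', hi', hs⟩ | ⟨γ, hγ, _⟩)
    · have : i' = ⟨i, hi⟩ := Subtype.ext hi'
      rwa [this] at hs
    · exact absurd i'.2 (by rw [hi']; intro hmem; exact adjI hnc hi hmem)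
    · have := gap_prop γ
      exact absurd hi (by rw [← hγ]; exact this.2.2.1)
  · intro h
    exact Or.inl ⟨⟨i, hi⟩, rfl, h⟩

include hr hI hnc in
lemma cutC_at_I1 {i : ℕ} (hi : i ∈ I) : cutC r I cfg (i-1) ↔ stCutL (cfg.2 ⟨i, hi⟩) := by
  have h2 : 2 ≤ i := (Imem hr hI hi).1
  constructor
  · rintro (⟨i', hi', hs⟩ | ⟨i', hi', hs⟩ | ⟨γ, hγ, _⟩)
    · have : (i':ℕ) + 1 = i := by omega
      exact absurd hi (fun hmem => adjI hnc i'.2 (this ▸ hmem))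
    · have : i' = ⟨i, hi⟩ := Subtype.ext (show (i':ℕ) = i by omega)
      rwa [this] at hs
    · have := gap_prop γ
      exact absurd hi (by rw [show i = (γ:ℕ) + 1 by omega]; exact this.2.2.2)
  · intro h
    exact Or.inr (Or.inl ⟨⟨i, hi⟩, show i = i - 1 + 1 by omega, h⟩)

lemma cutC_at_gap (γ : ↥(gapsF r I)) : cutC r I cfg (γ:ℕ) ↔ cfg.1 γ = true := by
  have hγ := gap_prop (r := r) (I := I) γ
  constructor
  · rintro (⟨i, hi, _⟩ | ⟨i, hi, _⟩ | ⟨γ', hγ', hs⟩)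
    · exact absurd (hi ▸ i.2) hγ.2.2.1
    · exact absurd (show (γ:ℕ) + 1 ∈ I by rw [← hi]; exact i.2) hγ.2.2.2
    · have : γ' = γ := Subtype.ext hγ'
      rwa [this] at hs
  · intro h
    exact Or.inr (Or.inr ⟨γ, rfl, h⟩)

include hr hI hnc in
lemma splC_not_cut {p : ℕ} (h : splC r I cfg p) :
    ¬ cutC r I cfg (p-1) ∧ ¬ cutC r I cfg p := by
  have hp : p ∈ I := splC_mem h
  have hs : stSplit (cfg.2 ⟨p, hp⟩) := (splC_iff hp).1 h
  rw [stSplit] at hs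
  constructor
  · rw [cutC_at_I1 hr hI hnc hp, stCutL]
    omega
  · rw [cutC_at_I hr hI hnc hp, stCutR]
    omega

/-- maximal start position `≤ p`. -/
lemma startmax (cfg : Cfg r I) {p : ℕ} (h1 : 1 ≤ p) :
    ∃ a, 1 ≤ a ∧ a ≤ p ∧ startC r I cfg a ∧
      ∀ x, a < x → x ≤ p → ¬ startC r I cfg x := by
  classical
  have hne : ((Finset.Icc 1 p).filter (startC r I cfg)).Nonempty := ⟨1, by
    rw [Finset.mem_filter, Finset.mem_Icc]
    exact ⟨⟨le_rfl, h1⟩, Or.inl rfl⟩⟩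
  have hmem := Finset.max'_mem _ hne
  rw [Finset.mem_filter, Finset.mem_Icc] at hmem
  refine ⟨_, hmem.1.1, hmem.1.2, hmem.2, ?_⟩
  intro x hax hxp hsx
  have : x ≤ Finset.max' _ hne := Finset.le_max' _ x (by
    rw [Finset.mem_filter, Finset.mem_Icc]
    exact ⟨⟨by omega, hxp⟩, hsx⟩)
  omega

/-- minimal end position `≥ p`. -/
lemma endmin (cfg : Cfg r I) {p : ℕ} (h2 : p ≤ r) :
    ∃ b, p ≤ b ∧ b ≤ r ∧ endC r I cfg b ∧
      ∀ x, p ≤ x → x < b → ¬ endC r I cfg x := by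
  classical
  have hne : ((Finset.Icc p r).filter (endC r I cfg)).Nonempty := ⟨r, by
    rw [Finset.mem_filter, Finset.mem_Icc]
    exact ⟨⟨h2, le_rfl⟩, Or.inl rfl⟩⟩
  have hmem := Finset.min'_mem _ hne
  rw [Finset.mem_filter, Finset.mem_Icc] at hmem
  refine ⟨_, hmem.1.1, hmem.1.2, hmem.2, ?_⟩
  intro x hpx hxb hsx
  have : Finset.min' _ hne ≤ x := Finset.min'_le _ x (by
    rw [Finset.mem_filter, Finset.mem_Icc]
    exact ⟨⟨hpx, by omega⟩, hsx⟩)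
  omega

lemma not_start_inside {a b x : ℕ} (hb : baseC r I cfg a b) (h1 : a < x) (h2 : x ≤ b)
    (h3 : x < b ∨ ¬ splC r I cfg x) : ¬ startC r I cfg x := by
  obtain ⟨hb1, hb2, hb3, hb4, hb5, hb6, hb7, hb8⟩ := hb
  rintro (rfl | hcut | hspl)
  · omega
  · exact hb6 (x-1) (by omega) (by omega) hcut
  · rcases h3 with h3 | h3
    · exact hb7 x h1 h3 hspl
    · exact h3 hspl

lemma not_end_inside {a b x : ℕ} (hb : baseC r I cfg a b) (h1 : a ≤ x) (h2 : x < b)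
    (h3 : a < x ∨ ¬ splC r I cfg x) : ¬ endC r I cfg x := by
  obtain ⟨hb1, hb2, hb3, hb4, hb5, hb6, hb7, hb8⟩ := hb
  rintro (rfl | hcut | hspl)
  · omega
  · exact hb6 x h1 h2 hcut
  · rcases h3 with h3 | h3
    · exact hb7 x h3 h2 hspl
    · exact h3 hspl

lemma base_unique_end {a a' b : ℕ} (h : baseC r I cfg a b) (h' : baseC r I cfg a' b) :
    a = a' := by
  by_contra hne
  rcases lt_or_gt_of_ne hne with hlt | hlt
  · refine not_start_inside h hlt h'.2.1 ?_ h'.2.2.2.1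
    by_cases hab : a' = b
    · exact Or.inr (hab ▸ h'.2.2.2.2.2.2.2 hab)
    · exact Or.inl (lt_of_le_of_ne h'.2.1 hab)
  · refine not_start_inside h' hlt h.2.1 ?_ h.2.2.2.1
    by_cases hab : a = b
    · exact Or.inr (hab ▸ h.2.2.2.2.2.2.2 hab)
    · exact Or.inl (lt_of_le_of_ne h.2.1 hab)

lemma base_unique_start {a b b' : ℕ} (h : baseC r I cfg a b) (h' : baseC r I cfg a b') :
    b = b' := by
  by_contra hne
  rcases lt_or_gt_of_ne hne with hlt | hlt
  · refine not_end_inside h' h.2.1 hlt ?_ h.2.2.2.2.1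
    by_cases hab : a = b
    · exact Or.inr (hab ▸ h.2.2.2.2.2.2.2 hab)
    · exact Or.inl (lt_of_le_of_ne h.2.1 hab)
  · refine not_end_inside h h'.2.1 hlt ?_ h'.2.2.2.2.1
    by_cases hab : a = b'
    · exact Or.inr (hab ▸ h'.2.2.2.2.2.2.2 hab)
    · exact Or.inl (lt_of_le_of_ne h'.2.1 hab)

include hr hI hnc in
lemma exists_base_end {b : ℕ} (h1 : 1 ≤ b) (h2 : b ≤ r) (hb : endC r I cfg b) :
    ∃ a, 1 ≤ a ∧ a ≤ b ∧ (splC r I cfg b → a < b) ∧ baseC r I cfg a b := by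
  by_cases hsp : splC r I cfg b
  · have hb2 : 2 ≤ b := (Imem hr hI (splC_mem hsp)).1
    obtain ⟨a, ha1, hale, hstart, hmax⟩ := startmax cfg (p := b - 1) (by omega)
    refine ⟨a, ha1, by omega, fun _ => by omega,
      ha1, by omega, h2, hstart, hb, ?_, ?_, by omega⟩
    · intro g hga hgb
      by_cases hg : g ≤ b - 2
      · have := hmax (g+1) (by omega) (by omega)
        simp only [startC, not_or] at this
        simpa using this.2.1
      · have : g = b - 1 := by omega
        rw [this]
        exact (splC_not_cut hr hI hnc hsp).1
    · intro x hax hxb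
      have := hmax x hax (by omega)
      simp only [startC, not_or] at this
      exact this.2.2
  · obtain ⟨a, ha1, hale, hstart, hmax⟩ := startmax cfg (p := b) h1
    refine ⟨a, ha1, hale, fun hsp' => absurd hsp' hsp,
      ha1, hale, h2, hstart, hb, ?_, ?_, ?_⟩
    · intro g hga hgb
      have := hmax (g+1) (by omega) (by omega)
      simp only [startC, not_or] at this
      simpa using this.2.1
    · intro x hax hxb
      have := hmax x hax (by omega)
      simp only [startC, not_or] at this
      exact this.2.2
    · intro hab
      rwa [hab]

include hr hI hnc in
lemma exists_base_start {a : ℕ} (h1 : 1 ≤ a) (h2 : a ≤ r) (ha : startC r I cfg a) :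
    ∃ b, a ≤ b ∧ b ≤ r ∧ (splC r I cfg a → a < b) ∧ baseC r I cfg a b := by
  by_cases hsp : splC r I cfg a
  · have ha3 : a + 3 ≤ r := (Imem hr hI (splC_mem hsp)).2
    obtain ⟨b, hble, hbr, hend, hmin⟩ := endmin cfg (p := a + 1) (by omega)
    refine ⟨b, by omega, hbr, fun _ => by omega,
      h1, by omega, hbr, ha, hend, ?_, ?_, by omega⟩
    · intro g hga hgb
      by_cases hg : a + 1 ≤ g
      · have := hmin g (by omega) (by omega)
        simp only [endC, not_or] at this
        exact this.2.1
      · have : g = a := by omega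
        rw [this]
        exact (splC_not_cut hr hI hnc hsp).2
    · intro x hax hxb
      have := hmin x (by omega) (by omega)
      simp only [endC, not_or] at this
      exact this.2.2
  · obtain ⟨b, hble, hbr, hend, hmin⟩ := endmin cfg (p := a) h2
    refine ⟨b, hble, hbr, fun hsp' => absurd hsp' hsp,
      h1, hble, hbr, ha, hend, ?_, ?_, ?_⟩
    · intro g hga hgb
      have := hmin g hga (by omega)
      simp only [endC, not_or] at this
      exact this.2.1
    · intro x hax hxb
      have := hmin x (by omega) (by omega)
      simp only [endC, not_or] at this
      exact this.2.2
    · intro hab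
      exact hsp

lemma exists_base_cover {p : ℕ} (h1 : 1 ≤ p) (h2 : p ≤ r) (hsp : ¬ splC r I cfg p) :
    ∃ a b, a ≤ p ∧ p ≤ b ∧ baseC r I cfg a b := by
  obtain ⟨a, ha1, hap, hstart, hmax⟩ := startmax cfg (p := p) h1
  obtain ⟨b, hpb, hbr, hend, hmin⟩ := endmin cfg (p := p) h2
  refine ⟨a, b, hap, hpb, ha1, by omega, hbr, hstart, hend, ?_, ?_, ?_⟩
  · intro g hga hgb
    by_cases hg : g < p
    · have := hmax (g+1) (by omega) (by omega)
      simp only [startC, not_or] at this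
      simpa using this.2.1
    · have := hmin g (by omega) (by omega)
      simp only [endC, not_or] at this
      exact this.2.1
  · intro x hax hxb
    rcases lt_trichotomy x p with hx | rfl | hx
    · have := hmax x hax (by omega)
      simp only [startC, not_or] at this
      exact this.2.2
    · exact hsp
    · have := hmin x (by omega) (by omega)
      simp only [endC, not_or] at this
      exact this.2.2
  · intro hab
    have : a = p := by omega
    rwa [this]

lemma exists_base_gap {g : ℕ} (h1 : 1 ≤ g) (h2 : g + 1 ≤ r) (hng : ¬ cutC r I cfg g) :
    ∃ a b, a ≤ g ∧ g + 1 ≤ b ∧ baseC r I cfg a b := by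
  obtain ⟨a, ha1, hap, hstart, hmax⟩ := startmax cfg (p := g) h1
  obtain ⟨b, hpb, hbr, hend, hmin⟩ := endmin cfg (p := g + 1) h2
  refine ⟨a, b, hap, hpb, ha1, by omega, hbr, hstart, hend, ?_, ?_, by omega⟩
  · intro g' hga hgb
    rcases lt_trichotomy g' g with hg | rfl | hg
    · have := hmax (g'+1) (by omega) (by omega)
      simp only [startC, not_or] at this
      simpa using this.2.1
    · exact hng
    · have := hmin g' (by omega) (by omega)
      simp only [endC, not_or] at this
      exact this.2.1
  · intro x hax hxb
    by_cases hx : x ≤ g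
    · have := hmax x hax hx
      simp only [startC, not_or] at this
      exact this.2.2
    · have := hmin x (by omega) (by omega)
      simp only [endC, not_or] at this
      exact this.2.2

lemma base_cover_unique {p a b a' b' : ℕ} (hsp : ¬ splC r I cfg p)
    (h : baseC r I cfg a b) (hap : a ≤ p) (hpb : p ≤ b)
    (h' : baseC r I cfg a' b') (hap' : a' ≤ p) (hpb' : p ≤ b') : a = a' ∧ b = b' := by
  have hbb : b = b' := by
    by_contra hne
    rcases lt_or_gt_of_ne hne with hlt | hlt
    · have h3 : a' < b ∨ ¬ splC r I cfg b := by
        by_cases hab : a' = b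
        · right
          have hpbe : p = b := by omega
          rwa [← hpbe]
        · exact Or.inl (lt_of_le_of_ne (hap'.trans hpb) hab)
      exact not_end_inside h' (hap'.trans hpb) hlt h3 h.2.2.2.2.1
    · have h3 : a < b' ∨ ¬ splC r I cfg b' := by
        by_cases hab : a = b'
        · right
          have hpbe : p = b' := by omega
          rwa [← hpbe]
        · exact Or.inl (lt_of_le_of_ne (hap.trans hpb') hab)
      exact not_end_inside h (hap.trans hpb') hlt h3 h'.2.2.2.2.1
  subst hbb
  exact ⟨base_unique_end h h', rfl⟩

lemma base_cover_split {p a b : ℕ} (hsp : splC r I cfg p) (h : baseC r I cfg a b)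
    (hap : a ≤ p) (hpb : p ≤ b) : b = p ∨ a = p := by
  by_contra hcon
  push_neg at hcon
  exact h.2.2.2.2.2.2.1 p (by omega) (by omega) hsp

include hr hI hnc in
lemma base_cover_card (cfg : Cfg r I) {p : ℕ} (h1 : 1 ≤ p) (h2 : p ≤ r) :
    ((pairsF r).filter fun q => baseC r I cfg q.1 q.2 ∧ q.1 ≤ p ∧ p ≤ q.2).card
      = if splC r I cfg p then 2 else 1 := by
  classical
  split_ifs with hsp
  · rw [Finset.card_eq_two]
    obtain ⟨a, ha1, hap, haps, hbaseL⟩ :=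
      exists_base_end hr hI hnc h1 h2 (Or.inr (Or.inr hsp))
    have hap' : a < p := haps hsp
    obtain ⟨b, hpb, hbr, hbps, hbaseR⟩ :=
      exists_base_start hr hI hnc h1 h2 (Or.inr (Or.inr hsp))
    have hpb' : p < b := hbps hsp
    refine ⟨(a, p), (p, b), by
      intro hcon
      rw [Prod.ext_iff] at hcon
      omega, ?_⟩
    ext q
    simp only [Finset.mem_filter, mem_pairsF, Finset.mem_insert, Finset.mem_singleton]
    constructor
    · rintro ⟨hq, hbase, hq1, hq2⟩
      rcases base_cover_split hsp hbase hq1 hq2 with hbp | hapq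
      · left
        have := base_unique_end (hbp ▸ hbase) hbaseL
        rw [Prod.ext_iff]
        omega
      · right
        have := base_unique_start (hapq ▸ hbase) hbaseR
        rw [Prod.ext_iff]
        omega
    · rintro (rfl | rfl)
      · exact ⟨⟨ha1, by omega, h2⟩, hbaseL, by omega, by omega⟩
      · exact ⟨⟨h1, by omega, hbr⟩, hbaseR, by omega, by omega⟩
  · rw [Finset.card_eq_one]
    obtain ⟨a, b, hap, hpb, hbase⟩ := exists_base_cover h1 h2 hsp
    refine ⟨(a, b), ?_⟩
    ext q
    simp only [Finset.mem_filter, mem_pairsF, Finset.mem_singleton]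
    constructor
    · rintro ⟨hq, hbase', hq1, hq2⟩
      have := base_cover_unique hsp hbase' hq1 hq2 hbase hap hpb
      rw [Prod.ext_iff]
      exact this
    · rintro rfl
      exact ⟨⟨hbase.1, hbase.2.1, hbase.2.2.1⟩, hbase, hap, hpb⟩

include hr hI hnc in
lemma base_end_card (cfg : Cfg r I) {b : ℕ} (h1 : 1 ≤ b) (h2 : b ≤ r) :
    ((pairsF r).filter fun q => baseC r I cfg q.1 q.2 ∧ q.2 = b).card
      = if endC r I cfg b then 1 else 0 := by
  classical
  split_ifs with he
  · rw [Finset.card_eq_one]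
    obtain ⟨a, ha1, hab, _, hbase⟩ := exists_base_end hr hI hnc h1 h2 he
    refine ⟨(a, b), ?_⟩
    ext q
    simp only [Finset.mem_filter, mem_pairsF, Finset.mem_singleton]
    constructor
    · rintro ⟨hq, hbase', hq2⟩
      have := base_unique_end (hq2 ▸ hbase') hbase
      rw [Prod.ext_iff]
      exact ⟨this, hq2⟩
    · rintro rfl
      exact ⟨⟨hbase.1, hbase.2.1, hbase.2.2.1⟩, hbase, rfl⟩
  · rw [Finset.card_eq_zero, Finset.filter_eq_empty_iff]
    rintro q hq ⟨hbase, rfl⟩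
    exact he hbase.2.2.2.2.1

end CfgSide


/-! ### properties of psiC -/

section PsiSide

variable (hr : 5 ≤ r) (hI : ∀ i ∈ I, 1 < i ∧ i < r - 2)
variable (hnc : ∀ i ∈ I, ∀ j ∈ I, i < j → i + 2 ≤ j) (hc : ∀ i ∈ I, 1 ≤ c i)
variable {cfg : Cfg r I}

lemma psiC_apply (cfg : Cfg r I) {q : ℕ × ℕ} (hq : q ∈ pairsF r) :
    psiC r I c cfg (rootv r q) = nuC r I c cfg q := by
  classical
  rw [psiC, Finsupp.finset_sum_apply]
  rw [Finset.sum_eq_single q]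
  · rw [Finsupp.single_apply, if_pos rfl]
  · intro q' hq' hne
    rw [Finsupp.single_apply, if_neg (fun h => hne (rootv_inj hq' hq h))]
  · intro h
    exact absurd hq h

lemma psiC_support (cfg : Cfg r I) : ∀ v ∈ (psiC r I c cfg).support, isPosRootA r v := by
  classical
  intro v hv
  rw [psiC] at hv
  have := Finsupp.support_finset_sum hv
  rw [Finset.mem_biUnion] at this
  obtain ⟨q, hq, hvq⟩ := this
  have := Finsupp.support_single_subset hvq
  rw [Finset.mem_singleton] at this
  exact isPosRootA_iff.2 ⟨q, hq, this⟩

lemma muF_psiC (cfg : Cfg r I) {q : ℕ × ℕ} (hq : q ∈ pairsF r) :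
    muF r (psiC r I c cfg) q = nuC r I c cfg q := psiC_apply cfg hq

include hr hI hnc hc in
lemma psiC_cover_at (cfg : Cfg r I) {p : ℕ} (h1 : 1 ≤ p) (h2 : p ≤ r) :
    ∑ q ∈ pairsF r, nuC r I c cfg q * indq q p = lamv I c p := by
  classical
  have hsplit : ∀ q ∈ pairsF r, nuC r I c cfg q * indq q p =
      (if q.1 = q.2 ∧ q.1 ∈ I then c q.1 - (if splC r I cfg q.1 then 1 else 0) else 0) * indq q p
      + (if baseC r I cfg q.1 q.2 ∧ q.1 ≤ p ∧ p ≤ q.2 then 1 else 0) := by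
    intro q hq
    rw [nuC, add_mul]
    congr 1
    rw [indq]
    split_ifs <;> simp_all
  rw [Finset.sum_congr rfl hsplit, Finset.sum_add_distrib]
  have hbase : ∑ q ∈ pairsF r, (if baseC r I cfg q.1 q.2 ∧ q.1 ≤ p ∧ p ≤ q.2 then 1 else 0)
      = if splC r I cfg p then 2 else 1 := by
    rw [Finset.sum_boole, ← base_cover_card hr hI hnc cfg h1 h2]
    simp
  have hsing : ∑ q ∈ pairsF r,
      (if q.1 = q.2 ∧ q.1 ∈ I then c q.1 - (if splC r I cfg q.1 then 1 else 0) else 0) * indq q p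
      = if p ∈ I then c p - (if splC r I cfg p then 1 else 0) else 0 := by
    rw [Finset.sum_eq_single (p, p)]
    · rw [indq_eq_one le_rfl le_rfl, mul_one]
      by_cases hp : p ∈ I <;> simp [hp]
    · intro q hq hne
      by_cases hd : q.1 = q.2 ∧ q.1 ∈ I
      · have : indq q p = 0 := by
          rw [indq, if_neg]
          intro hcon
          exact hne (Prod.ext (by omega) (by omega))
        rw [this, mul_zero]
      · rw [if_neg hd, zero_mul]
    · intro hcon
      exact absurd (mem_pairsF.2 ⟨h1, le_rfl, h2⟩) hcon
  rw [hbase, hsing, lamv]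
  by_cases hp : p ∈ I
  · have hcp := hc p hp
    by_cases hs : splC r I cfg p <;> simp [hp, hs] <;> omega
  · have hns : ¬ splC r I cfg p := fun h => hp (splC_mem h)
    simp [hp, hns]

include hr hI hnc hc in
lemma psiC_mem (cfg : Cfg r I) {lam : Fin r → ℕ}
    (hlam : ∀ t : Fin r, lam t = lamv I c (t.val + 1)) :
    psiC r I c cfg ∈ Sset r lam := by
  refine ⟨psiC_support cfg, ?_⟩
  funext t
  rw [show ((psiC r I c cfg).sum fun v n => n • v) t
      = (psiC r I c cfg).sum fun v n => n * v t by
    rw [Finsupp.sum, Finsupp.sum, Finset.sum_apply]; rfl]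
  rw [finsupp_sum_pairs _ (psiC_support cfg) (fun v n => n * v t) (fun v => by simp)]
  rw [hlam t]
  rw [← psiC_cover_at hr hI hnc hc cfg (p := t.val + 1) (by omega) (by omega)]
  apply Finset.sum_congr rfl
  intro q hq
  rw [muF_psiC cfg hq, rootv_apply]

include hr hI hnc in
lemma count_cuts (cfg : Cfg r I) :
    ∑ b ∈ Finset.Icc 1 r, (if cutC r I cfg b then 1 else 0)
      = (∑ γ : ↥(gapsF r I), if cfg.1 γ = true then 1 else 0)
        + ∑ i : ↥I, ((if stCutL (cfg.2 i) then 1 else 0) + (if stCutR (cfg.2 i) then 1 else 0)) := by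
  classical
  set I1 : Finset ℕ := I.image (fun i => i - 1) with hI1
  have hsub : gapsF r I ∪ (I ∪ I1) ⊆ Finset.Icc 1 r := by
    intro b hb
    rw [Finset.mem_union, Finset.mem_union] at hb
    rcases hb with hb | hb | hb
    · have : b ∈ Finset.Icc 1 (r-1) := Finset.mem_of_mem_filter b hb
      rw [Finset.mem_Icc] at this ⊢
      omega
    · have := Imem hr hI hb
      rw [Finset.mem_Icc]
      omega
    · rw [hI1, Finset.mem_image] at hb
      obtain ⟨i, hi, rfl⟩ := hb
      have := Imem hr hI hi
      rw [Finset.mem_Icc]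
      omega
  rw [← Finset.sum_subset hsub (fun b hb hnb => by
    rw [if_neg]
    intro hcut
    have hrange := cutC_range hr hI hcut
    apply hnb
    rw [Finset.mem_union, Finset.mem_union]
    by_cases h1 : b ∈ I
    · exact Or.inr (Or.inl h1)
    by_cases h2 : b + 1 ∈ I
    · refine Or.inr (Or.inr ?_)
      rw [hI1, Finset.mem_image]
      exact ⟨b + 1, h2, by omega⟩
    · refine Or.inl ?_
      rw [gapsF, Finset.mem_filter, Finset.mem_Icc]
      exact ⟨⟨hrange.1, by omega⟩, h1, h2⟩)]
  have hdisj1 : Disjoint (gapsF r I) (I ∪ I1) := by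
    rw [Finset.disjoint_left]
    intro b hb hb'
    have hbg : b ∉ I ∧ b + 1 ∉ I := by
      have := Finset.mem_filter.1 hb
      exact this.2
    rcases Finset.mem_union.1 hb' with hb' | hb'
    · exact hbg.1 hb'
    · rw [hI1, Finset.mem_image] at hb'
      obtain ⟨i, hi, rfl⟩ := hb'
      have := Imem hr hI hi
      exact hbg.2 (by rwa [show i - 1 + 1 = i by omega])
  have hdisj2 : Disjoint I I1 := by
    rw [Finset.disjoint_left]
    intro b hb hb'
    rw [hI1, Finset.mem_image] at hb'
    obtain ⟨i, hi, rfl⟩ := hb'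
    have h2 := Imem hr hI hi
    exact adjI hnc hb (by rwa [show i - 1 + 1 = i by omega])
  have e1 : ∑ b ∈ gapsF r I, (if cutC r I cfg b then 1 else 0)
      = ∑ γ : ↥(gapsF r I), (if cfg.1 γ = true then 1 else 0) := by
    rw [← Finset.sum_coe_sort (gapsF r I)]
    apply Finset.sum_congr rfl
    intro γ _
    congr 1
    rw [eq_iff_iff]
    exact cutC_at_gap γ
  have e2 : ∑ b ∈ I, (if cutC r I cfg b then 1 else 0)
      = ∑ i : ↥I, (if stCutR (cfg.2 i) then 1 else 0) := by
    rw [← Finset.sum_coe_sort I]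
    apply Finset.sum_congr rfl
    intro i _
    congr 1
    rw [eq_iff_iff]
    have := cutC_at_I hr hI hnc (cfg := cfg) i.2
    rwa [Subtype.coe_eta] at this
  have e3 : ∑ b ∈ I1, (if cutC r I cfg b then 1 else 0)
      = ∑ i : ↥I, (if stCutL (cfg.2 i) then 1 else 0) := by
    rw [hI1, Finset.sum_image (fun i hi j hj hij => by
      have := Imem hr hI hi
      have := Imem hr hI hj
      omega)]
    rw [← Finset.sum_coe_sort I]
    apply Finset.sum_congr rfl
    intro i _
    congr 1
    rw [eq_iff_iff]
    have := cutC_at_I1 hr hI hnc (cfg := cfg) i.2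
    rwa [Subtype.coe_eta] at this
  rw [Finset.sum_union hdisj1, Finset.sum_union hdisj2, e1, e2, e3, Finset.sum_add_distrib]
  omega

include hr hI in
lemma count_splits (cfg : Cfg r I) :
    ∑ b ∈ Finset.Icc 1 r, (if splC r I cfg b then 1 else 0)
      = ∑ i : ↥I, (if stSplit (cfg.2 i) then 1 else 0) := by
  classical
  have hsub : I ⊆ Finset.Icc 1 r := by
    intro i hi
    have := Imem hr hI hi
    rw [Finset.mem_Icc]
    omega
  rw [← Finset.sum_subset hsub (fun b hb hnb => by
    rw [if_neg]
    intro hspl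
    exact hnb (splC_mem hspl))]
  rw [← Finset.sum_coe_sort I]
  apply Finset.sum_congr rfl
  intro i _
  congr 1
  rw [eq_iff_iff]
  have := splC_iff (cfg := cfg) i.2
  rwa [Subtype.coe_eta] at this

include hr hI hnc hc in
lemma psiC_size (cfg : Cfg r I) :
    sizeF r (psiC r I c cfg) = statC r I (∑ i ∈ I, c i) cfg := by
  classical
  rw [size_eq_sum_pairs _ (psiC_support cfg)]
  rw [Finset.sum_congr rfl (fun q hq => muF_psiC cfg hq)]
  simp only [nuC]
  rw [Finset.sum_add_distrib]
  -- the singleton part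
  have hsing : ∑ q ∈ pairsF r,
      (if q.1 = q.2 ∧ q.1 ∈ I then c q.1 - (if splC r I cfg q.1 then 1 else 0) else 0)
      = ∑ i : ↥I, (c (i:ℕ) - (if splC r I cfg (i:ℕ) then 1 else 0)) := by
    rw [← Finset.sum_filter]
    rw [show ∑ i : ↥I, (c (i:ℕ) - (if splC r I cfg (i:ℕ) then 1 else 0))
        = ∑ i ∈ I, (c i - (if splC r I cfg i then 1 else 0)) from
      Finset.sum_coe_sort I (fun i => c i - (if splC r I cfg i then 1 else 0))]
    apply Finset.sum_nbij' (fun q => q.1) (fun i => (i, i))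
    · intro q hq
      simp only [Finset.mem_filter] at hq
      exact hq.2.2
    · intro i hi
      have := Imem hr hI hi
      simp only [Finset.mem_filter, mem_pairsF]
      exact ⟨⟨by omega, le_rfl, by omega⟩, by simp, hi⟩
    · intro q hq
      simp only [Finset.mem_filter] at hq
      exact Prod.ext rfl hq.2.1
    · intro i _
      rfl
    · intro q hq
      simp only [Finset.mem_filter] at hq
      rw [hq.2.1]
  -- the base part
  have hbase : ∑ q ∈ pairsF r, (if baseC r I cfg q.1 q.2 then 1 else 0)
      = 1 + (∑ b ∈ Finset.Icc 1 r, (if cutC r I cfg b then 1 else 0))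
          + ∑ b ∈ Finset.Icc 1 r, (if splC r I cfg b then 1 else 0) := by
    rw [Finset.sum_boole]
    push_cast
    have hmaps : ∀ q ∈ (pairsF r).filter (fun q => baseC r I cfg q.1 q.2),
        q.2 ∈ Finset.Icc 1 r := by
      intro q hq
      rw [Finset.mem_filter, mem_pairsF] at hq
      rw [Finset.mem_Icc]
      omega
    rw [Finset.card_eq_sum_card_fiberwise hmaps]
    have hfib : ∀ b ∈ Finset.Icc 1 r,
        ((pairsF r).filter (fun q => baseC r I cfg q.1 q.2 ∧ q.2 = b)).card
        = if endC r I cfg b then 1 else 0 := by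
      intro b hb
      rw [Finset.mem_Icc] at hb
      exact base_end_card hr hI hnc cfg hb.1 hb.2
    have hstep : ∑ b ∈ Finset.Icc 1 r,
        (Finset.filter (fun q => q.2 = b) ((pairsF r).filter (fun q => baseC r I cfg q.1 q.2))).card
        = ∑ b ∈ Finset.Icc 1 r, (if endC r I cfg b then 1 else 0) := by
      apply Finset.sum_congr rfl
      intro b hb
      rw [Finset.filter_filter]
      exact hfib b hb
    rw [hstep]
    have hpt : ∀ b ∈ Finset.Icc 1 r, (if endC r I cfg b then 1 else 0)
        = (if b = r then 1 else 0) + (if cutC r I cfg b then 1 else 0)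
          + (if splC r I cfg b then 1 else 0) := by
      intro b hb
      rw [Finset.mem_Icc] at hb
      by_cases hbr : b = r
      · have hnc1 : ¬ cutC r I cfg b := fun h => by
          have := cutC_range hr hI h; omega
        have hns : ¬ splC r I cfg b := fun h => by
          have := Imem hr hI (splC_mem h); omega
        have he : endC r I cfg b := Or.inl hbr
        rw [if_pos he, if_pos hbr, if_neg hnc1, if_neg hns]
      · by_cases hcut : cutC r I cfg b
        · have hns : ¬ splC r I cfg b := fun h => (splC_not_cut hr hI hnc h).2 hcut
          have he : endC r I cfg b := Or.inr (Or.inl hcut)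
          rw [if_pos he, if_neg hbr, if_pos hcut, if_neg hns]
        · by_cases hspl : splC r I cfg b
          · have he : endC r I cfg b := Or.inr (Or.inr hspl)
            rw [if_pos he, if_neg hbr, if_neg hcut, if_pos hspl]
          · have he : ¬ endC r I cfg b := by
              rintro (h | h | h)
              · exact hbr h
              · exact hcut h
              · exact hspl h
            rw [if_neg he, if_neg hbr, if_neg hcut, if_neg hspl]
    rw [Finset.sum_congr rfl hpt, Finset.sum_add_distrib, Finset.sum_add_distrib]
    have : ∑ b ∈ Finset.Icc 1 r, (if b = r then 1 else 0) = 1 := by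
      rw [Finset.sum_ite_eq' (Finset.Icc 1 r) r (fun _ => 1)]
      simp
      omega
    rw [this]
  rw [hsing, hbase, count_cuts hr hI hnc cfg, count_splits hr hI cfg, statC]
  have hM : ∑ i ∈ I, c i = ∑ i : ↥I, c (i:ℕ) := (Finset.sum_coe_sort I c).symm
  rw [hM]
  have hkey : ∑ i : ↥I, (c (i:ℕ) - (if splC r I cfg (i:ℕ) then 1 else 0))
      + ∑ i : ↥I, (if stSplit (cfg.2 i) then 1 else 0)
      = ∑ i : ↥I, c (i:ℕ) := by
    rw [← Finset.sum_add_distrib]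
    apply Finset.sum_congr rfl
    intro i _
    have hsp : splC r I cfg (i:ℕ) ↔ stSplit (cfg.2 i) := by
      have := splC_iff (cfg := cfg) i.2
      rwa [Subtype.coe_eta] at this
    have hci := hc (i:ℕ) i.2
    by_cases h : stSplit (cfg.2 i)
    · rw [if_pos (hsp.2 h), if_pos h]
      omega
    · rw [if_neg (fun hh => h (hsp.1 hh)), if_neg h]
      omega
  have hW : ∑ i : ↥I, stW (cfg.2 i)
      = ∑ i : ↥I, ((if stCutL (cfg.2 i) then 1 else 0) + (if stCutR (cfg.2 i) then 1 else 0)) := by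
    apply Finset.sum_congr rfl
    intro i _
    have : ∀ s : Fin 5, stW s = (if stCutL s then 1 else 0) + (if stCutR s then 1 else 0) := by
      intro s
      fin_cases s <;> norm_num [stW, stCutL, stCutR]
    exact this _
  rw [hW]
  omega

end PsiSide


/-! ### decomposition-side structure -/

section MSide

variable (hr : 5 ≤ r) (hI : ∀ i ∈ I, 1 < i ∧ i < r - 2)
variable (hnc : ∀ i ∈ I, ∀ j ∈ I, i < j → i + 2 ≤ j) (hc : ∀ i ∈ I, 1 ≤ c i)
variable {lam : Fin r → ℕ} {m : (Fin r → ℕ) →₀ ℕ}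
variable (hm : m ∈ Sset r lam)
variable (hlam : ∀ t : Fin r, lam t = lamv I c (t.val + 1))

lemma mem_covF {q : ℕ × ℕ} {p : ℕ} :
    q ∈ covF r p ↔ (q ∈ pairsF r ∧ q.1 ≤ p ∧ p ≤ q.2) := Finset.mem_filter

lemma mem_covG {q : ℕ × ℕ} {g : ℕ} :
    q ∈ covG r g ↔ (q ∈ pairsF r ∧ q.1 ≤ g ∧ g + 1 ≤ q.2) := Finset.mem_filter

lemma mem_covT {q : ℕ × ℕ} {i : ℕ} :
    q ∈ covT r i ↔ (q ∈ pairsF r ∧ q.1 ≤ i - 1 ∧ i + 1 ≤ q.2) := Finset.mem_filter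

include hm hlam in
lemma covsum_notI {p : ℕ} (hp : p ∉ I) (h1 : 1 ≤ p) (h2 : p ≤ r) :
    ∑ q ∈ covF r p, muF r m q = 1 := by
  rw [cov_lemma' hm hlam h1 h2, lamv, if_neg hp]

include hm hlam in
lemma cov_unique {p : ℕ} (hp : p ∉ I) (h1 : 1 ≤ p) (h2 : p ≤ r) {q q' : ℕ × ℕ}
    (hq : q ∈ covF r p) (hq' : q' ∈ covF r p)
    (hμ : muF r m q ≠ 0) (hμ' : muF r m q' ≠ 0) : q = q' :=
  sum_eq_one_unique (covsum_notI hm hlam hp h1 h2) hq hq' hμ hμ'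

include hm hlam in
lemma cov_exists {p : ℕ} (h1 : 1 ≤ p) (h2 : p ≤ r) :
    ∃ q ∈ covF r p, muF r m q ≠ 0 := by
  by_contra hcon
  push_neg at hcon
  have := cov_lemma' hm hlam h1 h2 (I := I) (c := c)
  rw [Finset.sum_eq_zero hcon] at this
  rw [lamv] at this
  split_ifs at this <;> omega

include hm hlam in
lemma mu_le_one {p : ℕ} (hp : p ∉ I) (h1 : 1 ≤ p) (h2 : p ≤ r) {q : ℕ × ℕ}
    (hq : q ∈ covF r p) : muF r m q ≤ 1 := by
  rw [← covsum_notI hm hlam hp h1 h2]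
  exact le_sum_of_mem hq

lemma cutM_iff {g : ℕ} : cutM r m g ↔ ∑ q ∈ covG r g, muF r m q = 0 := by
  rw [Finset.sum_eq_zero_iff]
  rfl

include hr hI hnc in
lemma notI_left {i : ℕ} (hi : i ∈ I) : i - 1 ∉ I := by
  intro h
  have h2 := Imem hr hI hi
  exact adjI hnc h (by rwa [show i - 1 + 1 = i by omega])

include hnc in
lemma notI_right {i : ℕ} (hi : i ∈ I) : i + 1 ∉ I := fun h => adjI hnc hi h

include hm hlam in
lemma coverage_at_I {i : ℕ} (hi : i ∈ I) (h2 : 2 ≤ i) (h3 : i + 1 ≤ r) :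
    muF r m (i,i) + (∑ q ∈ covG r (i-1), muF r m q) + (∑ q ∈ covG r i, muF r m q)
      = 1 + c i + ∑ q ∈ covT r i, muF r m q := by
  classical
  have hins : covF r i = insert (i,i) (covG r (i-1) ∪ covG r i) := by
    ext q
    rw [mem_covF, Finset.mem_insert, Finset.mem_union, mem_covG, mem_covG]
    constructor
    · rintro ⟨hq, hq1, hq2⟩
      by_cases he : q = (i, i)
      · exact Or.inl he
      · have : q.1 < i ∨ i < q.2 := by
          by_contra hcon
          push_neg at hcon
          exact he (Prod.ext (by omega) (by omega))
        rcases this with h | h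
        · exact Or.inr (Or.inl ⟨hq, by omega, by omega⟩)
        · exact Or.inr (Or.inr ⟨hq, by omega, by omega⟩)
    · rintro (rfl | ⟨hq, hq1, hq2⟩ | ⟨hq, hq1, hq2⟩)
      · exact ⟨mem_pairsF.2 ⟨by omega, le_rfl, by omega⟩, le_rfl, le_rfl⟩
      · exact ⟨hq, by omega, by omega⟩
      · exact ⟨hq, by omega, by omega⟩
  have hnotmem : (i,i) ∉ covG r (i-1) ∪ covG r i := by
    rw [Finset.mem_union, mem_covG, mem_covG]
    push_neg
    constructor
    · intro _
      omega
    · intro _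
      omega
  have hcov : muF r m (i,i) + ∑ q ∈ covG r (i-1) ∪ covG r i, muF r m q = 1 + c i := by
    have := cov_lemma' hm hlam (p := i) (by omega) (by omega)
    rw [hins, Finset.sum_insert hnotmem] at this
    rw [this, lamv, if_pos hi]
  have hunion : ∑ q ∈ covG r (i-1) ∪ covG r i, muF r m q
      + ∑ q ∈ covG r (i-1) ∩ covG r i, muF r m q
      = (∑ q ∈ covG r (i-1), muF r m q) + ∑ q ∈ covG r i, muF r m q :=
    Finset.sum_union_inter
  have hinter : covG r (i-1) ∩ covG r i = covT r i := by
    ext q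
    rw [Finset.mem_inter, mem_covG, mem_covG, mem_covT]
    constructor
    · rintro ⟨⟨hq, h1', h2'⟩, ⟨_, h3', h4'⟩⟩
      exact ⟨hq, h1', h4'⟩
    · rintro ⟨hq, h1', h2'⟩
      exact ⟨⟨hq, h1', by omega⟩, ⟨hq, by omega, h2'⟩⟩
  rw [hinter] at hunion
  omega

include hr hI hnc hm hlam in
lemma X_le_one {i : ℕ} (hi : i ∈ I) : ∑ q ∈ covG r (i-1), muF r m q ≤ 1 := by
  have h2 := Imem hr hI hi
  have hsub : covG r (i-1) ⊆ covF r (i-1) := by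
    intro q hq
    rw [mem_covG] at hq
    rw [mem_covF]
    exact ⟨hq.1, hq.2.1, by omega⟩
  calc ∑ q ∈ covG r (i-1), muF r m q ≤ ∑ q ∈ covF r (i-1), muF r m q :=
        Finset.sum_le_sum_of_subset hsub
    _ = 1 := covsum_notI hm hlam (notI_left hr hI hnc hi) (by omega) (by omega)

include hr hI hnc hm hlam in
lemma Y_le_one {i : ℕ} (hi : i ∈ I) : ∑ q ∈ covG r i, muF r m q ≤ 1 := by
  have h2 := Imem hr hI hi
  have hsub : covG r i ⊆ covF r (i+1) := by
    intro q hq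
    rw [mem_covG] at hq
    rw [mem_covF]
    exact ⟨hq.1, by omega, hq.2.2⟩
  calc ∑ q ∈ covG r i, muF r m q ≤ ∑ q ∈ covF r (i+1), muF r m q :=
        Finset.sum_le_sum_of_subset hsub
    _ = 1 := covsum_notI hm hlam (notI_right hnc hi) (by omega) (by omega)

lemma T_le_X {i : ℕ} : ∑ q ∈ covT r i, muF r m q ≤ ∑ q ∈ covG r (i-1), muF r m q := by
  apply Finset.sum_le_sum_of_subset
  intro q hq
  rw [mem_covT] at hq
  rw [mem_covG]
  exact ⟨hq.1, hq.2.1, by omega⟩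

lemma splitM_not_cut {p : ℕ} (hsp : splitM r m p) : ¬ cutM r m (p-1) ∧ ¬ cutM r m p := by
  obtain ⟨⟨qe, hqe, hμe, hqe2, hqe1⟩, ⟨qs, hqs, hμs, hqs1, hqs2⟩⟩ := hsp
  constructor
  · intro hcut
    exact hμe (hcut qe (mem_covG.2 ⟨hqe, by omega, by omega⟩))
  · intro hcut
    exact hμs (hcut qs (mem_covG.2 ⟨hqs, by omega, by omega⟩))

include hr hI hnc hm hlam in
lemma splitM_T_zero {i : ℕ} (hi : i ∈ I) (hsp : splitM r m i) :
    ∑ q ∈ covT r i, muF r m q = 0 := by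
  have h2 := Imem hr hI hi
  by_contra hcon
  obtain ⟨q, hq, hμ⟩ : ∃ q ∈ covT r i, muF r m q ≠ 0 := by
    by_contra hcon2
    push_neg at hcon2
    exact hcon (Finset.sum_eq_zero hcon2)
  rw [mem_covT] at hq
  obtain ⟨⟨qe, hqe, hμe, hqe2, hqe1⟩, _⟩ := hsp
  have hq' : q ∈ covF r (i-1) := mem_covF.2 ⟨hq.1, hq.2.1, by
    have := mem_pairsF.1 hq.1
    omega⟩
  have hqe' : qe ∈ covF r (i-1) := mem_covF.2 ⟨hqe, by omega, by omega⟩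
  have := cov_unique hm hlam (notI_left hr hI hnc hi) (by omega) (by omega) hq' hqe' hμ hμe
  have h1 := hq.2.2
  rw [this, hqe2] at h1
  omega

include hr hI hnc hm hlam in
lemma thr_of {i : ℕ} (hi : i ∈ I) (h1 : ¬ cutM r m (i-1)) (h2 : ¬ cutM r m i)
    (h3 : ¬ splitM r m i) : ∑ q ∈ covT r i, muF r m q ≠ 0 := by
  have hii := Imem hr hI hi
  rw [cutM] at h1 h2
  push_neg at h1 h2
  obtain ⟨q, hq, hμ⟩ := h1
  obtain ⟨q', hq', hμ'⟩ := h2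
  rw [mem_covG] at hq hq'
  intro hT
  rw [Finset.sum_eq_zero_iff] at hT
  by_cases hy : i + 1 ≤ q.2
  · exact hμ (hT q (mem_covT.2 ⟨hq.1, hq.2.1, hy⟩))
  · -- q ends at i
    have hq2i : q.2 = i := by omega
    by_cases hx : q'.1 ≤ i - 1
    · exact hμ' (hT q' (mem_covT.2 ⟨hq'.1, hx, hq'.2.2⟩))
    · have hq1i : q'.1 = i := by omega
      refine h3 ⟨⟨q, hq.1, hμ, hq2i, by
        have := mem_pairsF.1 hq.1
        omega⟩, ⟨q', hq'.1, hμ', hq1i, by omega⟩⟩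

include hr hI hnc hc hm hlam in
lemma mu_singleton {i : ℕ} (hi : i ∈ I) :
    muF r m (i,i) = (c i - (if splitM r m i then 1 else 0))
      + (if cutM r m (i-1) ∧ cutM r m i ∧ ¬ splitM r m i then 1 else 0) := by
  have hii := Imem hr hI hi
  have hcov := coverage_at_I hm hlam hi (by omega) (by omega)
  have hX1 := X_le_one hr hI hnc hm hlam hi
  have hY1 := Y_le_one hr hI hnc hm hlam hi
  have hTX := T_le_X (m := m) (i := i)
  have hci := hc i hi
  by_cases hsp : splitM r m i
  · have hcuts := splitM_not_cut hsp
    have hT0 := splitM_T_zero hr hI hnc hm hlam hi hsp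
    have hX : ∑ q ∈ covG r (i-1), muF r m q ≠ 0 := fun h => hcuts.1 (cutM_iff.2 h)
    have hY : ∑ q ∈ covG r i, muF r m q ≠ 0 := fun h => hcuts.2 (cutM_iff.2 h)
    rw [if_pos hsp, if_neg (by tauto)]
    omega
  · rw [if_neg hsp]
    by_cases hcL : cutM r m (i-1)
    · have hX0 : ∑ q ∈ covG r (i-1), muF r m q = 0 := cutM_iff.1 hcL
      by_cases hcR : cutM r m i
      · have hY0 : ∑ q ∈ covG r i, muF r m q = 0 := cutM_iff.1 hcR
        rw [if_pos ⟨hcL, hcR, hsp⟩]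
        omega
      · have hY : ∑ q ∈ covG r i, muF r m q ≠ 0 := fun h => hcR (cutM_iff.2 h)
        rw [if_neg (by tauto)]
        omega
    · have hX : ∑ q ∈ covG r (i-1), muF r m q ≠ 0 := fun h => hcL (cutM_iff.2 h)
      by_cases hcR : cutM r m i
      · have hY0 : ∑ q ∈ covG r i, muF r m q = 0 := cutM_iff.1 hcR
        have hTY : ∑ q ∈ covT r i, muF r m q ≤ ∑ q ∈ covG r i, muF r m q := by
          apply Finset.sum_le_sum_of_subset
          intro q hq
          rw [mem_covT] at hq
          rw [mem_covG]
          exact ⟨hq.1, by omega, hq.2.2⟩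
        rw [if_neg (by tauto)]
        omega
      · have hY : ∑ q ∈ covG r i, muF r m q ≠ 0 := fun h => hcR (cutM_iff.2 h)
        have hT := thr_of hr hI hnc hm hlam hi hcL hcR hsp
        rw [if_neg (by tauto)]
        omega

end MSide


/-! ### phiC predicate lemmas and the main structure lemmas -/

section PhiSide

variable (hr : 5 ≤ r) (hI : ∀ i ∈ I, 1 < i ∧ i < r - 2)
variable (hnc : ∀ i ∈ I, ∀ j ∈ I, i < j → i + 2 ≤ j) (hc : ∀ i ∈ I, 1 ≤ c i)
variable {lam : Fin r → ℕ} {m : (Fin r → ℕ) →₀ ℕ}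
variable (hm : m ∈ Sset r lam)
variable (hlam : ∀ t : Fin r, lam t = lamv I c (t.val + 1))

lemma encSt_cutL {l rr sp : Prop} : stCutL (encSt l rr sp) ↔ l := by
  by_cases hl : l <;> by_cases hrr : rr <;> by_cases hsp : sp <;>
    simp [encSt, stCutL, hl, hrr, hsp] <;> decide

lemma encSt_cutR {l rr sp : Prop} : stCutR (encSt l rr sp) ↔ rr := by
  by_cases hl : l <;> by_cases hrr : rr <;> by_cases hsp : sp <;>
    simp [encSt, stCutR, hl, hrr, hsp] <;> decide

lemma encSt_split {l rr sp : Prop} : stSplit (encSt l rr sp) ↔ (¬l ∧ ¬rr ∧ sp) := by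
  by_cases hl : l <;> by_cases hrr : rr <;> by_cases hsp : sp <;>
    simp [encSt, stSplit, hl, hrr, hsp] <;> decide

lemma phiC_state (i : ↥I) :
    (phiC r I m).2 i = encSt (cutM r m ((i:ℕ) - 1)) (cutM r m (i:ℕ)) (splitM r m (i:ℕ)) := rfl

include hr hI hnc in
lemma cutC_phi {g : ℕ} (h1 : 1 ≤ g) (h2 : g + 1 ≤ r) :
    cutC r I (phiC r I m) g ↔ cutM r m g := by
  by_cases hgI : g ∈ I
  · rw [cutC_at_I hr hI hnc hgI, phiC_state, encSt_cutR]
  · by_cases hgI1 : g + 1 ∈ I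
    · have := cutC_at_I1 hr hI hnc (cfg := phiC r I m) hgI1
      rw [show g + 1 - 1 = g by omega] at this
      rw [this, phiC_state, encSt_cutL, show (g + 1 : ℕ) - 1 = g by omega]
    · have hmem : g ∈ gapsF r I := by
        rw [gapsF, Finset.mem_filter, Finset.mem_Icc]
        exact ⟨⟨h1, by omega⟩, hgI, hgI1⟩
      have := cutC_at_gap (cfg := phiC r I m) ⟨g, hmem⟩
      rw [this]
      show (if cutM r m g then true else false) = true ↔ cutM r m g
      split_ifs with h <;> simp [h]

lemma splC_phi {p : ℕ} : splC r I (phiC r I m) p ↔ (p ∈ I ∧ splitM r m p) := by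
  constructor
  · intro h
    have hp := splC_mem h
    have := (splC_iff hp).1 h
    rw [phiC_state] at this
    exact ⟨hp, (encSt_split.1 this).2.2⟩
  · rintro ⟨hp, hsp⟩
    refine (splC_iff hp).2 ?_
    rw [phiC_state]
    exact encSt_split.2 ⟨(splitM_not_cut hsp).1, (splitM_not_cut hsp).2, hsp⟩

include hr hI hnc in
lemma baseC_phi_diag {i : ℕ} (hi : i ∈ I) :
    baseC r I (phiC r I m) i i ↔ (cutM r m (i-1) ∧ cutM r m i ∧ ¬ splitM r m i) := by
  have him := Imem hr hI hi
  constructor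
  · rintro ⟨_, _, _, hstart, hend, _, _, hdiag⟩
    have hnspl : ¬ splC r I (phiC r I m) i := hdiag rfl
    have hnsM : ¬ splitM r m i := fun h => hnspl (splC_phi.2 ⟨hi, h⟩)
    refine ⟨?_, ?_, hnsM⟩
    · rcases hstart with h | h | h
      · omega
      · exact (cutC_phi hr hI hnc (by omega) (by omega)).1 h
      · exact absurd h hnspl
    · rcases hend with h | h | h
      · omega
      · exact (cutC_phi hr hI hnc (by omega) (by omega)).1 h
      · exact absurd h hnspl
  · rintro ⟨hL, hR, hS⟩
    have hnspl : ¬ splC r I (phiC r I m) i := fun h => hS (splC_phi.1 h).2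
    exact ⟨by omega, le_rfl, by omega,
      Or.inr (Or.inl ((cutC_phi hr hI hnc (by omega) (by omega)).2 hL)),
      Or.inr (Or.inl ((cutC_phi hr hI hnc (by omega) (by omega)).2 hR)),
      fun g h1 h2 => by omega, fun x h1 h2 => by omega, fun _ => hnspl⟩

include hr hI hnc hm hlam in
lemma part_is_base {q : ℕ × ℕ} (hq : q ∈ pairsF r) (hnotI : ¬(q.1 = q.2 ∧ q.1 ∈ I))
    (hμ : muF r m q ≠ 0) : baseC r I (phiC r I m) q.1 q.2 := by
  obtain ⟨ha1, hab, hbr'⟩ := mem_pairsF.1 hq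
  refine ⟨ha1, hab, hbr', ?_, ?_, ?_, ?_, ?_⟩
  · -- startC
    by_cases ha1' : q.1 = 1
    · exact Or.inl ha1'
    · by_cases hcut : cutM r m (q.1 - 1)
      · exact Or.inr (Or.inl ((cutC_phi hr hI hnc (by omega) (by omega)).2 hcut))
      · rw [cutM] at hcut
        push_neg at hcut
        obtain ⟨q', hq', hμ'⟩ := hcut
        rw [mem_covG] at hq'
        obtain ⟨hq'p, hx', hy'⟩ := hq'
        have hne : q' ≠ q := fun h => by rw [h] at hx'; omega
        have haI : q.1 ∈ I := by
          by_contra hnI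
          have h1 : q ∈ covF r q.1 := mem_covF.2 ⟨hq, le_rfl, hab⟩
          have h2 : q' ∈ covF r q.1 := mem_covF.2 ⟨hq'p, by omega, by omega⟩
          exact hne (cov_unique hm hlam hnI ha1 (by omega) h2 h1 hμ' hμ)
        have hba : q.1 < q.2 := lt_of_le_of_ne hab (fun h => hnotI ⟨h, haI⟩)
        have him := Imem hr hI haI
        have ha1I : q.1 + 1 ∉ I := notI_right hnc haI
        have hy : q'.2 = q.1 := by
          by_contra hyne
          have hy2 : q.1 + 1 ≤ q'.2 := by omega
          have h1 : q ∈ covF r (q.1+1) := mem_covF.2 ⟨hq, by omega, by omega⟩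
          have h2 : q' ∈ covF r (q.1+1) := mem_covF.2 ⟨hq'p, by omega, hy2⟩
          exact hne (cov_unique hm hlam ha1I (by omega) (by omega) h2 h1 hμ' hμ)
        exact Or.inr (Or.inr (splC_phi.2 ⟨haI,
          ⟨q', hq'p, hμ', hy, by omega⟩, ⟨q, hq, hμ, rfl, hba⟩⟩))
  · -- endC
    by_cases hbr1 : q.2 = r
    · exact Or.inl hbr1
    · by_cases hcut : cutM r m q.2
      · exact Or.inr (Or.inl ((cutC_phi hr hI hnc (by omega) (by omega)).2 hcut))
      · rw [cutM] at hcut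
        push_neg at hcut
        obtain ⟨q', hq', hμ'⟩ := hcut
        rw [mem_covG] at hq'
        obtain ⟨hq'p, hx', hy'⟩ := hq'
        have hne : q' ≠ q := fun h => by rw [h] at hy'; omega
        have hbI : q.2 ∈ I := by
          by_contra hnI
          have h1 : q ∈ covF r q.2 := mem_covF.2 ⟨hq, hab, le_rfl⟩
          have h2 : q' ∈ covF r q.2 := mem_covF.2 ⟨hq'p, by omega, by omega⟩
          exact hne (cov_unique hm hlam hnI (by omega) (by omega) h2 h1 hμ' hμ)
        have hba : q.1 < q.2 := lt_of_le_of_ne hab (fun h => hnotI ⟨h, h ▸ hbI⟩)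
        have him := Imem hr hI hbI
        have hb1I : q.2 - 1 ∉ I := notI_left hr hI hnc hbI
        have hx : q'.1 = q.2 := by
          by_contra hxne
          have hx2 : q'.1 ≤ q.2 - 1 := by omega
          have h1 : q ∈ covF r (q.2-1) := mem_covF.2 ⟨hq, by omega, by omega⟩
          have h2 : q' ∈ covF r (q.2-1) := mem_covF.2 ⟨hq'p, hx2, by omega⟩
          exact hne (cov_unique hm hlam hb1I (by omega) (by omega) h2 h1 hμ' hμ)
        exact Or.inr (Or.inr (splC_phi.2 ⟨hbI,
          ⟨q, hq, hμ, rfl, hba⟩, ⟨q', hq'p, hμ', hx, by omega⟩⟩))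
  · -- no cut
    intro g hga hgb
    rw [cutC_phi hr hI hnc (by omega) (by omega)]
    intro hcM
    exact hμ (hcM q (mem_covG.2 ⟨hq, hga, by omega⟩))
  · -- no split
    intro x hax hxb hspl
    obtain ⟨hxI, hsplit⟩ := splC_phi.1 hspl
    obtain ⟨⟨qe, hqe, hμe, hqe2, hqe1⟩, _⟩ := hsplit
    have hxm := Imem hr hI hxI
    have hx1 : x - 1 ∉ I := notI_left hr hI hnc hxI
    have hqeb := mem_pairsF.1 hqe
    have h1 : q ∈ covF r (x-1) := mem_covF.2 ⟨hq, by omega, by omega⟩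
    have h2 : qe ∈ covF r (x-1) := mem_covF.2 ⟨hqe, by omega, by omega⟩
    have heq := cov_unique hm hlam hx1 (by omega) (by omega) h1 h2 hμ hμe
    rw [← heq] at hqe2
    omega
  · -- diag
    intro heq hspl
    exact hnotI ⟨heq, ((splC_phi.1 hspl).1 : q.1 ∈ I)⟩

include hr hI hnc hm hlam in
lemma base_is_part {q : ℕ × ℕ} (hq : q ∈ pairsF r) (hnotI : ¬(q.1 = q.2 ∧ q.1 ∈ I))
    (hb : baseC r I (phiC r I m) q.1 q.2) : muF r m q = 1 := by
  obtain ⟨ha1, hab, hbr'⟩ := mem_pairsF.1 hq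
  obtain ⟨_, _, _, hstart, hend, hnocut, hnospl, hdiag⟩ := hb
  obtain ⟨p, hpa, hpb, hpI⟩ : ∃ p, q.1 ≤ p ∧ p ≤ q.2 ∧ p ∉ I := by
    by_cases haI : q.1 ∈ I
    · have hblt : q.1 < q.2 := lt_of_le_of_ne hab (fun h => hnotI ⟨h, haI⟩)
      exact ⟨q.1 + 1, by omega, by omega, notI_right hnc haI⟩
    · exact ⟨q.1, le_rfl, hab, haI⟩
  obtain ⟨q', hq', hμ'⟩ := cov_exists hm hlam (p := p) (by omega) (by omega)
  rw [mem_covF] at hq'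
  obtain ⟨hq'p, hx, hy⟩ := hq'
  have hq'b := mem_pairsF.1 hq'p
  have hyb : q'.2 ≤ q.2 := by
    by_contra hcon
    push_neg at hcon
    rcases hend with hbr1 | hcut | hspl
    · omega
    · rw [cutC_phi hr hI hnc (by omega) (by omega)] at hcut
      exact hμ' (hcut q' (mem_covG.2 ⟨hq'p, by omega, by omega⟩))
    · obtain ⟨hbI, hsplit⟩ := splC_phi.1 hspl
      obtain ⟨_, ⟨qs, hqs, hμs, hqs1, hqs2⟩⟩ := hsplit
      have hbm := Imem hr hI hbI
      have hbn : q.2 + 1 ∉ I := notI_right hnc hbI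
      have hqsb := mem_pairsF.1 hqs
      have hne : q' ≠ qs := by
        intro h
        rw [h, hqs1] at hx
        exact hpI (by rwa [show p = q.2 by omega])
      have h1 : q' ∈ covF r (q.2+1) := mem_covF.2 ⟨hq'p, by omega, by omega⟩
      have h2 : qs ∈ covF r (q.2+1) := mem_covF.2 ⟨hqs, by omega, by omega⟩
      exact hne (cov_unique hm hlam hbn (by omega) (by omega) h1 h2 hμ' hμs)
  have hyeq : q'.2 = q.2 := by
    by_contra hcon
    have hyb2 : q'.2 < q.2 := by omega
    have hnc1 : ¬ cutM r m q'.2 := by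
      have := hnocut q'.2 (by omega) (by omega)
      rwa [cutC_phi hr hI hnc (by omega) (by omega)] at this
    rw [cutM] at hnc1
    push_neg at hnc1
    obtain ⟨q'', hq'', hμ''⟩ := hnc1
    rw [mem_covG] at hq''
    obtain ⟨hq''p, hx'', hy''⟩ := hq''
    have hq''b := mem_pairsF.1 hq''p
    have hne : q'' ≠ q' := fun h => by rw [h] at hy''; omega
    have hyI : q'.2 ∈ I := by
      by_contra hnI
      have h1 : q' ∈ covF r q'.2 := mem_covF.2 ⟨hq'p, hq'b.2.1, le_rfl⟩
      have h2 : q'' ∈ covF r q'.2 := mem_covF.2 ⟨hq''p, hx'', by omega⟩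
      exact hne (cov_unique hm hlam hnI (by omega) (by omega) h2 h1 hμ'' hμ')
    have hym := Imem hr hI hyI
    have hpy : p < q'.2 := lt_of_le_of_ne hy (fun h => hpI (h ▸ hyI))
    have hay : q.1 < q'.2 := by omega
    have hy1I : q'.2 - 1 ∉ I := notI_left hr hI hnc hyI
    have hx''eq : q''.1 = q'.2 := by
      by_contra hcon2
      have hle : q''.1 ≤ q'.2 - 1 := by omega
      have h1 : q' ∈ covF r (q'.2-1) := mem_covF.2 ⟨hq'p, by omega, by omega⟩
      have h2 : q'' ∈ covF r (q'.2-1) := mem_covF.2 ⟨hq''p, hle, by omega⟩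
      exact hne (cov_unique hm hlam hy1I (by omega) (by omega) h2 h1 hμ'' hμ')
    have hsplit : splitM r m q'.2 :=
      ⟨⟨q', hq'p, hμ', rfl, by omega⟩, ⟨q'', hq''p, hμ'', hx''eq, by omega⟩⟩
    exact hnospl q'.2 hay hyb2 (splC_phi.2 ⟨hyI, hsplit⟩)
  have hxa : q.1 ≤ q'.1 := by
    by_contra hcon
    push_neg at hcon
    rcases hstart with hbr1 | hcut | hspl
    · omega
    · rw [cutC_phi hr hI hnc (by omega) (by omega)] at hcut
      exact hμ' (hcut q' (mem_covG.2 ⟨hq'p, by omega, by omega⟩))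
    · obtain ⟨haI, hsplit⟩ := splC_phi.1 hspl
      obtain ⟨⟨qe, hqe, hμe, hqe2, hqe1⟩, _⟩ := hsplit
      have ham := Imem hr hI haI
      have han : q.1 - 1 ∉ I := notI_left hr hI hnc haI
      have hqeb := mem_pairsF.1 hqe
      have hne : q' ≠ qe := by
        intro h
        rw [h] at hyeq
        exact hnotI ⟨by omega, haI⟩
      have h1 : q' ∈ covF r (q.1-1) := mem_covF.2 ⟨hq'p, by omega, by omega⟩
      have h2 : qe ∈ covF r (q.1-1) := mem_covF.2 ⟨hqe, by omega, by omega⟩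
      exact hne (cov_unique hm hlam han (by omega) (by omega) h1 h2 hμ' hμe)
  have hxeq : q'.1 = q.1 := by
    by_contra hcon
    have hax : q.1 < q'.1 := by omega
    have hnc1 : ¬ cutM r m (q'.1 - 1) := by
      have := hnocut (q'.1 - 1) (by omega) (by omega)
      rwa [cutC_phi hr hI hnc (by omega) (by omega)] at this
    rw [cutM] at hnc1
    push_neg at hnc1
    obtain ⟨q'', hq'', hμ''⟩ := hnc1
    rw [mem_covG] at hq''
    obtain ⟨hq''p, hx'', hy''⟩ := hq''
    have hq''b := mem_pairsF.1 hq''p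
    have hne : q'' ≠ q' := fun h => by rw [h] at hx''; omega
    have hxI : q'.1 ∈ I := by
      by_contra hnI
      have h1 : q' ∈ covF r q'.1 := mem_covF.2 ⟨hq'p, le_rfl, hq'b.2.1⟩
      have h2 : q'' ∈ covF r q'.1 := mem_covF.2 ⟨hq''p, by omega, by omega⟩
      exact hne (cov_unique hm hlam hnI (by omega) (by omega) h2 h1 hμ'' hμ')
    have hxm := Imem hr hI hxI
    have hpx : q'.1 < p := lt_of_le_of_ne hx (fun h => hpI (h ▸ hxI))
    have hxb : q'.1 < q.2 := by omega
    have hx1I : q'.1 + 1 ∉ I := notI_right hnc hxI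
    have hy''eq : q''.2 = q'.1 := by
      by_contra hcon2
      have hge : q'.1 + 1 ≤ q''.2 := by omega
      have h1 : q' ∈ covF r (q'.1+1) := mem_covF.2 ⟨hq'p, by omega, by omega⟩
      have h2 : q'' ∈ covF r (q'.1+1) := mem_covF.2 ⟨hq''p, by omega, hge⟩
      exact hne (cov_unique hm hlam hx1I (by omega) (by omega) h2 h1 hμ'' hμ')
    have hsplit : splitM r m q'.1 :=
      ⟨⟨q'', hq''p, hμ'', hy''eq, by omega⟩, ⟨q', hq'p, hμ', rfl, by omega⟩⟩
    exact hnospl q'.1 hax hxb (splC_phi.2 ⟨hxI, hsplit⟩)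
  have hqq : q' = q := Prod.ext hxeq hyeq
  rw [← hqq]
  have hle := mu_le_one hm hlam hpI (by omega) (by omega) (mem_covF.2 ⟨hq'p, hx, hy⟩)
  omega

end PhiSide


/-! ### round-trip lemmas -/

section RoundTrip

variable (hr : 5 ≤ r) (hI : ∀ i ∈ I, 1 < i ∧ i < r - 2)
variable (hnc : ∀ i ∈ I, ∀ j ∈ I, i < j → i + 2 ≤ j) (hc : ∀ i ∈ I, 1 ≤ c i)
variable {lam : Fin r → ℕ} {m : (Fin r → ℕ) →₀ ℕ}
variable (hm : m ∈ Sset r lam)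
variable (hlam : ∀ t : Fin r, lam t = lamv I c (t.val + 1))

lemma finsupp_eq_sum_pairs (hm0 : ∀ v ∈ m.support, isPosRootA r v) :
    m = ∑ q ∈ pairsF r, Finsupp.single (rootv r q) (muF r m q) := by
  classical
  ext v
  rw [Finsupp.finset_sum_apply]
  by_cases hv : v ∈ m.support
  · obtain ⟨q₀, hq₀, rfl⟩ := isPosRootA_iff.1 (hm0 v hv)
    rw [Finset.sum_eq_single q₀]
    · rw [Finsupp.single_apply, if_pos rfl]
      rfl
    · intro q hq hne
      rw [Finsupp.single_apply, if_neg (fun h => hne (rootv_inj hq hq₀ h))]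
    · intro h
      exact absurd hq₀ h
  · have hv0 : m v = 0 := Finsupp.notMem_support_iff.1 hv
    rw [hv0]
    symm
    apply Finset.sum_eq_zero
    intro q hq
    rw [Finsupp.single_apply]
    split_ifs with h
    · show m (rootv r q) = 0
      rw [h]
      exact hv0
    · rfl

include hr hI hnc hc hm hlam in
lemma psi_phi_eq : psiC r I c (phiC r I m) = m := by
  rw [psiC]
  conv_rhs => rw [finsupp_eq_sum_pairs hm.1]
  apply Finset.sum_congr rfl
  intro q hq
  congr 1
  by_cases hd : q.1 = q.2 ∧ q.1 ∈ I
  · obtain ⟨he, hiI⟩ := hd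
    rw [nuC, if_pos ⟨he, hiI⟩]
    have hqe : q = (q.1, q.1) := Prod.ext rfl he.symm
    rw [show muF r m q = muF r m (q.1, q.1) by rw [← hqe]]
    rw [mu_singleton hr hI hnc hc hm hlam hiI]
    have h1 : (if splC r I (phiC r I m) q.1 then 1 else 0)
        = (if splitM r m q.1 then 1 else 0) := by
      by_cases hsp : splitM r m q.1
      · rw [if_pos (splC_phi.2 ⟨hiI, hsp⟩), if_pos hsp]
      · rw [if_neg (fun h => hsp (splC_phi.1 h).2), if_neg hsp]
    have h2 : (if baseC r I (phiC r I m) q.1 q.2 then 1 else 0)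
        = (if cutM r m (q.1-1) ∧ cutM r m q.1 ∧ ¬ splitM r m q.1 then 1 else 0) := by
      rw [← he]
      by_cases hb : cutM r m (q.1-1) ∧ cutM r m q.1 ∧ ¬ splitM r m q.1
      · rw [if_pos ((baseC_phi_diag hr hI hnc hiI).2 hb), if_pos hb]
      · rw [if_neg (fun h => hb ((baseC_phi_diag hr hI hnc hiI).1 h)), if_neg hb]
    rw [h1, h2]
  · rw [nuC, if_neg hd, zero_add]
    by_cases hμ : muF r m q = 0
    · rw [hμ, if_neg]
      intro hb
      have := base_is_part hr hI hnc hm hlam hq hd hb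
      omega
    · have hbase := part_is_base hr hI hnc hm hlam hq hd hμ
      rw [if_pos hbase]
      exact (base_is_part hr hI hnc hm hlam hq hd hbase).symm

lemma cutM_psi (cfg : Cfg r I) {g : ℕ} (h1 : 1 ≤ g) (h2 : g + 1 ≤ r) :
    cutM r (psiC r I c cfg) g ↔ cutC r I cfg g := by
  constructor
  · intro hcM
    by_contra hnc'
    obtain ⟨a, b, hag, hgb, hbase⟩ := exists_base_gap (cfg := cfg) h1 h2 hnc'
    have hpairs : (a, b) ∈ pairsF r := mem_pairsF.2 ⟨hbase.1, hbase.2.1, hbase.2.2.1⟩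
    have hmem : (a, b) ∈ covG r g := mem_covG.2 ⟨hpairs, hag, hgb⟩
    have hnu : nuC r I c cfg (a, b) ≠ 0 := by
      have hb1 : (if baseC r I cfg (a, b).1 (a, b).2 then (1:ℕ) else 0) = 1 := if_pos hbase
      rw [nuC]
      omega
    apply hnu
    rw [← muF_psiC cfg hpairs]
    exact hcM _ hmem
  · intro hcC q hq
    rw [mem_covG] at hq
    rw [muF_psiC cfg hq.1, nuC]
    have hq' := mem_pairsF.1 hq.1
    rw [if_neg (fun (h : q.1 = q.2 ∧ q.1 ∈ I) => by omega)]
    rw [if_neg (fun hb => (hb : baseC r I cfg q.1 q.2).2.2.2.2.2.1 g hq.2.1 (by omega) hcC)]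

include hr hI hnc in
lemma splitM_psi (cfg : Cfg r I) {i : ℕ} (hi : i ∈ I) :
    splitM r (psiC r I c cfg) i ↔ splC r I cfg i := by
  have him := Imem hr hI hi
  constructor
  · rintro ⟨⟨qe, hqe, hμe, hqe2, hqe1⟩, ⟨qs, hqs, hμs, hqs1, hqs2⟩⟩
    rw [muF_psiC cfg hqe, nuC] at hμe
    rw [muF_psiC cfg hqs, nuC] at hμs
    have hbe : baseC r I cfg qe.1 qe.2 := by
      by_contra hb
      rw [if_neg hb, if_neg (fun (h : qe.1 = qe.2 ∧ qe.1 ∈ I) => by omega)] at hμe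
      exact hμe rfl
    have hbs : baseC r I cfg qs.1 qs.2 := by
      by_contra hb
      rw [if_neg hb, if_neg (fun (h : qs.1 = qs.2 ∧ qs.1 ∈ I) => by omega)] at hμs
      exact hμs rfl
    have hend : endC r I cfg i := hqe2 ▸ hbe.2.2.2.2.1
    rcases hend with h | h | h
    · omega
    · exact absurd h (hbs.2.2.2.2.2.1 i (by omega) (by omega))
    · exact h
  · intro hsp
    have hendC : endC r I cfg i := Or.inr (Or.inr hsp)
    have hstC : startC r I cfg i := Or.inr (Or.inr hsp)
    obtain ⟨a, ha1, hai, haps, hbaseL⟩ := exists_base_end hr hI hnc (by omega) (by omega) hendC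
    have hai' : a < i := haps hsp
    obtain ⟨b, hib, hbr2, hbps, hbaseR⟩ := exists_base_start hr hI hnc (by omega) (by omega) hstC
    have hib' : i < b := hbps hsp
    constructor
    · have hpairs : (a, i) ∈ pairsF r := mem_pairsF.2 ⟨ha1, by omega, by omega⟩
      refine ⟨(a, i), hpairs, ?_, rfl, hai'⟩
      rw [muF_psiC cfg hpairs, nuC]
      have hb1 : (if baseC r I cfg (a, i).1 (a, i).2 then (1:ℕ) else 0) = 1 := if_pos hbaseL
      omega
    · have hpairs : (i, b) ∈ pairsF r := mem_pairsF.2 ⟨by omega, by omega, hbr2⟩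
      refine ⟨(i, b), hpairs, ?_, rfl, hib'⟩
      rw [muF_psiC cfg hpairs, nuC]
      have hb1 : (if baseC r I cfg (i, b).1 (i, b).2 then (1:ℕ) else 0) = 1 := if_pos hbaseR
      omega

lemma encSt_eq_state (s : Fin 5) (l rr sp : Prop) (hl : l ↔ stCutL s)
    (hrr : rr ↔ stCutR s) (hsp : sp ↔ stSplit s) : encSt l rr sp = s := by
  fin_cases s <;>
    simp only [stCutL, stCutR, stSplit] at hl hrr hsp <;>
    norm_num at hl hrr hsp <;>
    simp [encSt, hl, hrr, hsp] <;>
    decide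

include hr hI hnc in
lemma phi_psi_eq (cfg : Cfg r I) : phiC r I (psiC r I c cfg) = cfg := by
  have h1 : (phiC r I (psiC r I c cfg)).1 = cfg.1 := by
    funext γ
    have hγ := gap_prop γ
    show (if cutM r (psiC r I c cfg) ↑γ then true else false) = cfg.1 γ
    by_cases h : cutC r I cfg ↑γ
    · rw [if_pos ((cutM_psi cfg (by omega) (by omega)).2 h)]
      exact ((cutC_at_gap γ).1 h).symm
    · rw [if_neg (fun hh => h ((cutM_psi cfg (by omega) (by omega)).1 hh))]
      cases hcg : cfg.1 γ
      · rfl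
      · exact absurd ((cutC_at_gap γ).2 hcg) h
  have h2 : (phiC r I (psiC r I c cfg)).2 = cfg.2 := by
    funext i
    have him := Imem hr hI i.2
    show encSt (cutM r (psiC r I c cfg) ((i:ℕ)-1)) (cutM r (psiC r I c cfg) (i:ℕ))
      (splitM r (psiC r I c cfg) (i:ℕ)) = cfg.2 i
    apply encSt_eq_state
    · rw [cutM_psi cfg (by omega) (by omega)]
      have := cutC_at_I1 hr hI hnc (cfg := cfg) i.2
      rwa [Subtype.coe_eta] at this
    · rw [cutM_psi cfg (by omega) (by omega)]
      have := cutC_at_I hr hI hnc (cfg := cfg) i.2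
      rwa [Subtype.coe_eta] at this
    · rw [splitM_psi hr hI hnc cfg i.2]
      have := splC_iff (cfg := cfg) i.2
      rwa [Subtype.coe_eta] at this
  exact Prod.ext h1 h2

end RoundTrip


/-! ### the grand bijection and generating polynomial -/

section Grand

variable (hr : 5 ≤ r) (hI : ∀ i ∈ I, 1 < i ∧ i < r - 2)
variable (hnc : ∀ i ∈ I, ∀ j ∈ I, i < j → i + 2 ≤ j) (hc : ∀ i ∈ I, 1 ≤ c i)
variable {lam : Fin r → ℕ}
variable (hlam : ∀ t : Fin r, lam t = lamv I c (t.val + 1))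

include hr hI hnc hc hlam in
lemma sum_bij_main (hfin : (Sset r lam).Finite) (f : ℕ → ℚ) :
    ∑ m' ∈ hfin.toFinset, f (sizeF r m')
      = ∑ cfg : Cfg r I, f (statC r I (∑ i ∈ I, c i) cfg) := by
  apply Finset.sum_nbij' (phiC r I) (psiC r I c)
  · intro a _
    exact Finset.mem_univ _
  · intro cfg _
    exact Set.Finite.mem_toFinset hfin |>.2 (psiC_mem hr hI hnc hc cfg hlam)
  · intro a ha
    exact psi_phi_eq hr hI hnc hc (Set.Finite.mem_toFinset hfin |>.1 ha) hlam
  · intro cfg _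
    exact phi_psi_eq hr hI hnc cfg
  · intro a ha
    congr 1
    have hmem := Set.Finite.mem_toFinset hfin |>.1 ha
    conv_lhs => rw [← psi_phi_eq hr hI hnc hc hmem hlam]
    exact psiC_size hr hI hnc hc (phiC r I a)

include hr hI hnc in
lemma two_ell_le {ℓ : ℕ} (hcard : I.card = ℓ) : 2 * ℓ + 3 ≤ r := by
  classical
  have hd : ∀ x ∈ I, ∀ y ∈ I, x ≠ y → Disjoint ({x, x+1} : Finset ℕ) {y, y+1} := by
    intro x hx y hy hne
    have : x + 2 ≤ y ∨ y + 2 ≤ x := by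
      rcases lt_or_gt_of_ne hne with h | h
      · exact Or.inl (hnc x hx y hy h)
      · exact Or.inr (hnc y hy x hx h)
    rw [Finset.disjoint_left]
    intro a ha ha'
    simp only [Finset.mem_insert, Finset.mem_singleton] at ha ha'
    omega
  have hcb := Finset.card_biUnion hd
  have hsub : I.biUnion (fun i => ({i, i+1} : Finset ℕ)) ⊆ Finset.Icc 2 (r-2) := by
    intro x hx
    rw [Finset.mem_biUnion] at hx
    obtain ⟨i, hi, hxi⟩ := hx
    have := Imem hr hI hi
    simp only [Finset.mem_insert, Finset.mem_singleton] at hxi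
    rw [Finset.mem_Icc]
    omega
  have hle := Finset.card_le_card hsub
  rw [hcb] at hle
  have hsum : ∑ u ∈ I, ({u, u+1} : Finset ℕ).card = 2 * ℓ := by
    rw [Finset.sum_congr rfl (fun u _ => by
      rw [Finset.card_insert_of_notMem (by simp), Finset.card_singleton])]
    rw [Finset.sum_const, hcard, smul_eq_mul]
    omega
  rw [hsum, Nat.card_Icc] at hle
  omega

include hr hI hnc in
lemma gapsF_card {ℓ : ℕ} (hcard : I.card = ℓ) : (gapsF r I).card = r - 1 - 2 * ℓ := by
  classical
  have heq : gapsF r I = Finset.Icc 1 (r-1) \ (I ∪ I.image (fun i => i - 1)) := by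
    ext g
    simp only [gapsF, Finset.mem_filter, Finset.mem_sdiff, Finset.mem_union,
      Finset.mem_image, not_or, not_exists, not_and]
    constructor
    · rintro ⟨hicc, hg1, hg2⟩
      exact ⟨hicc, hg1, fun i hi hig => by
        have := Imem hr hI hi
        exact hg2 (by rwa [show g + 1 = i by omega])⟩
    · rintro ⟨hicc, hg1, hg2⟩
      exact ⟨hicc, hg1, fun hcon => hg2 (g+1) hcon (by omega)⟩
  rw [heq]
  have hsub : I ∪ I.image (fun i => i - 1) ⊆ Finset.Icc 1 (r-1) := by
    intro x hx
    rw [Finset.mem_union] at hx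
    rw [Finset.mem_Icc]
    rcases hx with hx | hx
    · have := Imem hr hI hx
      omega
    · rw [Finset.mem_image] at hx
      obtain ⟨i, hi, rfl⟩ := hx
      have := Imem hr hI hi
      omega
  rw [Finset.card_sdiff_of_subset hsub, Nat.card_Icc]
  have hdisj : Disjoint I (I.image (fun i => i - 1)) := by
    rw [Finset.disjoint_left]
    intro x hx hx'
    rw [Finset.mem_image] at hx'
    obtain ⟨i, hi, rfl⟩ := hx'
    have := Imem hr hI hi
    exact adjI hnc hx (by rwa [show i - 1 + 1 = i by omega])
  rw [Finset.card_union_of_disjoint hdisj]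
  rw [Finset.card_image_of_injOn (fun x hx y hy hxy => by
    have := Imem hr hI hx
    have := Imem hr hI hy
    omega)]
  rw [hcard]
  omega

lemma stW0 : stW 0 = 2 := by
  have h : (0 : Fin 5).val = 0 := rfl
  rw [stW, h]
  norm_num
lemma stW1 : stW 1 = 1 := by
  have h : (1 : Fin 5).val = 1 := rfl
  rw [stW, h]
  norm_num
lemma stW2 : stW 2 = 1 := by
  have h : (2 : Fin 5).val = 2 := rfl
  rw [stW, h]
  norm_num
lemma stW3 : stW 3 = 0 := by
  have h : (3 : Fin 5).val = 3 := rfl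
  rw [stW, h]
  norm_num
lemma stW4 : stW 4 = 0 := by
  have h : (4 : Fin 5).val = 4 := rfl
  rw [stW, h]
  norm_num

lemma poly_identity (M : ℕ) :
    ∑ cfg : Cfg r I, (X : ℚ[X]) ^ statC r I M cfg
      = X^(1+M) * (X+1)^((gapsF r I).card) * (X^2 + 2*X + 2)^(I.card) := by
  classical
  have hsplit : ∀ cfg : Cfg r I, (X : ℚ[X]) ^ statC r I M cfg
      = X^(1+M) * (∏ γ : ↥(gapsF r I), X^(if cfg.1 γ = true then 1 else 0))
        * ∏ i : ↥I, X^(stW (cfg.2 i)) := by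
    intro cfg
    rw [statC, Finset.prod_pow_eq_pow_sum, Finset.prod_pow_eq_pow_sum, ← pow_add, ← pow_add]
  rw [Finset.sum_congr rfl (fun cfg _ => hsplit cfg)]
  rw [Fintype.sum_prod_type
    (f := fun cfg : Cfg r I => ((X:ℚ[X]) ^ (1 + M) * ∏ γ : ↥(gapsF r I),
      X ^ if cfg.1 γ = true then 1 else 0) * ∏ i : ↥I, X ^ stW (cfg.2 i))]
  have hinner : ∀ f : ↥(gapsF r I) → Bool,
      ∑ s : ↥I → Fin 5, (X:ℚ[X])^(1+M) * (∏ γ : ↥(gapsF r I), X^(if f γ = true then 1 else 0))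
        * ∏ i : ↥I, X^(stW (s i))
      = (X:ℚ[X])^(1+M) * (∏ γ : ↥(gapsF r I), X^(if f γ = true then 1 else 0))
        * ∑ s : ↥I → Fin 5, ∏ i : ↥I, X^(stW (s i)) := by
    intro f
    rw [Finset.mul_sum]
  rw [Finset.sum_congr rfl (fun f _ => hinner f)]
  rw [← Finset.sum_mul]
  have hS : ∑ s : ↥I → Fin 5, ∏ i : ↥I, (X:ℚ[X])^(stW (s i))
      = (X^2 + 2*X + 2)^(I.card) := by
    rw [← Fintype.piFinset_univ, ← Finset.prod_univ_sum (fun _ => Finset.univ)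
      (fun (_ : ↥I) (v : Fin 5) => (X:ℚ[X])^(stW v))]
    have h5 : ∑ v : Fin 5, (X:ℚ[X])^(stW v) = X^2 + 2*X + 2 := by
      rw [Fin.sum_univ_five, stW0, stW1, stW2, stW3, stW4]
      ring
    rw [Finset.prod_congr rfl (fun i _ => h5), Finset.prod_const, Finset.card_univ,
      Fintype.card_coe]
  have hF : ∑ f : ↥(gapsF r I) → Bool,
      (X:ℚ[X])^(1+M) * ∏ γ : ↥(gapsF r I), X^(if f γ = true then 1 else 0)
      = X^(1+M) * (X+1)^((gapsF r I).card) := by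
    rw [← Finset.mul_sum]
    congr 1
    rw [← Fintype.piFinset_univ, ← Finset.prod_univ_sum (fun _ => Finset.univ)
      (fun (_ : ↥(gapsF r I)) (b : Bool) => (X:ℚ[X])^(if b = true then 1 else 0))]
    have hb : ∑ b : Bool, (X:ℚ[X])^(if b = true then 1 else 0) = X + 1 := by
      rw [Fintype.sum_bool]
      norm_num
    rw [Finset.prod_congr rfl (fun γ _ => hb), Finset.prod_const, Finset.card_univ,
      Fintype.card_coe]
  rw [hS, hF]

lemma eval_one_sum_pow {β : Type*} (s : Finset β) (g : β → ℕ) :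
    eval 1 (∑ x ∈ s, (X:ℚ[X])^(g x)) = ∑ x ∈ s, (1:ℚ) := by
  rw [Polynomial.eval_finset_sum]
  apply Finset.sum_congr rfl
  intro x _
  simp

lemma eval_one_deriv_sum_pow {β : Type*} (s : Finset β) (g : β → ℕ) :
    eval 1 (derivative (∑ x ∈ s, (X:ℚ[X])^(g x))) = ∑ x ∈ s, (g x : ℚ) := by
  rw [map_sum, Polynomial.eval_finset_sum]
  apply Finset.sum_congr rfl
  intro x _
  rw [Polynomial.derivative_X_pow]
  simp

lemma eval_one_deriv2_sum_pow {β : Type*} (s : Finset β) (g : β → ℕ) :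
    eval 1 (derivative (derivative (∑ x ∈ s, (X:ℚ[X])^(g x))))
      = ∑ x ∈ s, ((g x : ℚ) * ((g x - 1 : ℕ) : ℚ)) := by
  rw [map_sum, map_sum, Polynomial.eval_finset_sum]
  apply Finset.sum_congr rfl
  intro x _
  rw [Polynomial.derivative_X_pow, Polynomial.derivative_C_mul, Polynomial.derivative_X_pow]
  simp

lemma sq_eq_helper (n : ℕ) : (n:ℚ)^2 = (n:ℚ) * ((n - 1 : ℕ) : ℚ) + (n:ℚ) := by
  cases n with
  | zero => simp
  | succ k =>
    rw [Nat.add_sub_cancel]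
    push_cast
    ring

end Grand


/-! ### explicit derivative evaluations -/

lemma eval_derivs1 (a G L : ℕ) (ha : 1 ≤ a) (hG : 2 ≤ G) :
    eval 1 (derivative ((X:ℚ[X])^a * (X+1)^G * (X^2+2*X+2)^L)) * 10
      = (2^G * 5^L) * (10*(a:ℚ) + 5*(G:ℚ) + 8*(L:ℚ)) := by
  obtain ⟨a', rfl⟩ : ∃ a', a = a' + 1 := ⟨a - 1, by omega⟩
  obtain ⟨G', rfl⟩ : ∃ G', G = G' + 2 := ⟨G - 2, by omega⟩
  rcases L with _ | L
  · simp [derivative_mul, derivative_pow, derivative_X_pow, derivative_add,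
      derivative_one, derivative_ofNat, Nat.add_sub_cancel]
    push_cast
    ring
  · simp [derivative_mul, derivative_pow, derivative_X_pow, derivative_add,
      derivative_one, derivative_ofNat, Nat.add_sub_cancel]
    push_cast
    ring

lemma eval_derivs2 (a G L : ℕ) (ha : 1 ≤ a) (hG : 2 ≤ G) :
    eval 1 (derivative (derivative ((X:ℚ[X])^a * (X+1)^G * (X^2+2*X+2)^L))) * 100
      = (2^G * 5^L) * (100*(a:ℚ)*(a:ℚ) - 100*a + 25*G*G - 25*G + 64*L*L - 64*L + 40*L
          + 100*a*G + 160*a*L + 80*G*L) := by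
  obtain ⟨a', rfl⟩ : ∃ a', a = a' + 1 := ⟨a - 1, by omega⟩
  obtain ⟨G', rfl⟩ : ∃ G', G = G' + 2 := ⟨G - 2, by omega⟩
  rcases L with _ | L
  · simp [derivative_mul, derivative_pow, derivative_X_pow, derivative_add,
      derivative_one, derivative_ofNat, Nat.add_sub_cancel]
    push_cast
    ring
  · rcases L with _ | L
    · simp [derivative_mul, derivative_pow, derivative_X_pow, derivative_add,
        derivative_one, derivative_ofNat, Nat.add_sub_cancel]
      push_cast
      ring
    · simp [derivative_mul, derivative_pow, derivative_X_pow, derivative_add,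
        derivative_one, derivative_ofNat, Nat.add_sub_cancel]
      push_cast
      ring

end Prop36

theorem mean_variance_nonconsecutive (r ℓ : ℕ) (hr : 5 ≤ r)
    (I : Finset ℕ) (hcard : I.card = ℓ)
    (hI : ∀ i ∈ I, 1 < i ∧ i < r - 2)
    (hnc : ∀ i ∈ I, ∀ j ∈ I, i < j → i + 2 ≤ j)
    (c : ℕ → ℕ) (hc : ∀ i ∈ I, 1 ≤ c i)
    (m : ℕ) (hm : m = ∑ i ∈ I, c i)
    (lam : Fin r → ℕ)
    (hlam : lam = fun t => if t.val + 1 ∈ I then 1 + c (t.val + 1) else 1) :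
    (∑' k : ℕ, (k : ℚ) * (NA r k lam : ℚ)) / (∑' k : ℕ, (NA r k lam : ℚ)) =
      ((r : ℚ) + 1) / 2 - (ℓ : ℚ) / 5 + (m : ℚ) ∧
    (∑' k : ℕ, (k : ℚ) ^ 2 * (NA r k lam : ℚ)) / (∑' k : ℕ, (NA r k lam : ℚ)) -
      ((∑' k : ℕ, (k : ℚ) * (NA r k lam : ℚ)) / (∑' k : ℕ, (NA r k lam : ℚ))) ^ 2 =
      ((r : ℚ) - 1) / 4 + 3 * (ℓ : ℚ) / 50 := by
  classical
  subst hm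
  have hlam' : ∀ t : Fin r, lam t = Prop36.lamv I c (t.val + 1) := by
    intro t
    rw [hlam, Prop36.lamv]
  have hfin := Prop36.Sset_finite (r := r) (I := I) (c := c) (lam := lam) hlam'
  have h2l := Prop36.two_ell_le hr hI hnc hcard
  have hGval := Prop36.gapsF_card hr hI hnc hcard
  have hG2 : 2 ≤ (Prop36.gapsF r I).card := by omega
  -- tsum reductions to polynomial evaluations
  have hS0 : ∑' k : ℕ, (NA r k lam : ℚ)
      = eval 1 (∑ cfg : Prop36.Cfg r I,
          (X:ℚ[X]) ^ Prop36.statC r I (∑ i ∈ I, c i) cfg) := by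
    rw [show ∑' k : ℕ, (NA r k lam : ℚ) = ∑' k : ℕ, (1:ℚ) * (NA r k lam : ℚ) from
      tsum_congr (fun k => by ring)]
    rw [Prop36.tsum_moment hr hI hfin hlam' (fun _ => (1:ℚ)),
      Prop36.sum_bij_main hr hI hnc hc hlam' hfin (fun _ => (1:ℚ)),
      Prop36.eval_one_sum_pow]
  have hS1 : ∑' k : ℕ, (k:ℚ) * (NA r k lam : ℚ)
      = eval 1 (derivative (∑ cfg : Prop36.Cfg r I,
          (X:ℚ[X]) ^ Prop36.statC r I (∑ i ∈ I, c i) cfg)) := by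
    rw [Prop36.tsum_moment hr hI hfin hlam' (fun k => (k:ℚ)),
      Prop36.sum_bij_main hr hI hnc hc hlam' hfin (fun k => (k:ℚ)),
      Prop36.eval_one_deriv_sum_pow]
  have hS2 : ∑' k : ℕ, (k:ℚ)^2 * (NA r k lam : ℚ)
      = eval 1 (derivative (derivative (∑ cfg : Prop36.Cfg r I,
          (X:ℚ[X]) ^ Prop36.statC r I (∑ i ∈ I, c i) cfg)))
        + eval 1 (derivative (∑ cfg : Prop36.Cfg r I,
          (X:ℚ[X]) ^ Prop36.statC r I (∑ i ∈ I, c i) cfg)) := by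
    rw [Prop36.tsum_moment hr hI hfin hlam' (fun k => (k:ℚ)^2),
      Prop36.sum_bij_main hr hI hnc hc hlam' hfin (fun k => (k:ℚ)^2),
      Prop36.eval_one_deriv2_sum_pow, Prop36.eval_one_deriv_sum_pow,
      ← Finset.sum_add_distrib]
    exact Finset.sum_congr rfl (fun cfg _ => Prop36.sq_eq_helper _)
  have hPI := Prop36.poly_identity (r := r) (I := I) (∑ i ∈ I, c i)
  -- cast facts
  have hGq : (((Prop36.gapsF r I).card : ℕ) : ℚ) = (r:ℚ) - 1 - 2*(ℓ:ℚ) := by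
    rw [hGval, Nat.cast_sub (by omega), Nat.cast_sub (by omega)]
    push_cast
    ring
  have hLq : ((I.card : ℕ) : ℚ) = (ℓ:ℚ) := by
    rw [hcard]
  -- evaluations
  have hA : eval 1 (∑ cfg : Prop36.Cfg r I,
      (X:ℚ[X]) ^ Prop36.statC r I (∑ i ∈ I, c i) cfg)
      = 2^((Prop36.gapsF r I).card) * 5^(I.card) := by
    rw [hPI]
    simp
    norm_num
  have hA0 : (2:ℚ)^((Prop36.gapsF r I).card) * 5^(I.card) ≠ 0 := by positivity
  have hB10 := Prop36.eval_derivs1 (1 + ∑ i ∈ I, c i) ((Prop36.gapsF r I).card) (I.card)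
    (by omega) hG2
  have hC100 := Prop36.eval_derivs2 (1 + ∑ i ∈ I, c i) ((Prop36.gapsF r I).card) (I.card)
    (by omega) hG2
  rw [← hPI] at hB10 hC100
  rw [Nat.cast_add, Nat.cast_one, hGq, hLq] at hB10 hC100
  have hBv : eval 1 (derivative (∑ cfg : Prop36.Cfg r I,
      (X:ℚ[X]) ^ Prop36.statC r I (∑ i ∈ I, c i) cfg))
      = 2^((Prop36.gapsF r I).card) * 5^(I.card)
        * (((r:ℚ) + 1)/2 - (ℓ:ℚ)/5 + ((∑ i ∈ I, c i : ℕ) : ℚ)) := by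
    linear_combination hB10 / 10
  have hCv : eval 1 (derivative (derivative (∑ cfg : Prop36.Cfg r I,
      (X:ℚ[X]) ^ Prop36.statC r I (∑ i ∈ I, c i) cfg)))
      = 2^((Prop36.gapsF r I).card) * 5^(I.card)
        * ((100*(1+((∑ i ∈ I, c i : ℕ) : ℚ))*(1+((∑ i ∈ I, c i : ℕ) : ℚ))
            - 100*(1+((∑ i ∈ I, c i : ℕ) : ℚ))
            + 25*((r:ℚ)-1-2*ℓ)*((r:ℚ)-1-2*ℓ) - 25*((r:ℚ)-1-2*ℓ)
            + 64*(ℓ:ℚ)*ℓ - 64*ℓ + 40*ℓ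
            + 100*(1+((∑ i ∈ I, c i : ℕ) : ℚ))*((r:ℚ)-1-2*ℓ)
            + 160*(1+((∑ i ∈ I, c i : ℕ) : ℚ))*ℓ
            + 80*((r:ℚ)-1-2*ℓ)*ℓ) / 100) := by
    linear_combination hC100 / 100
  constructor
  · rw [hS1, hS0, hA, hBv]
    field_simp
  · rw [hS2, hS1, hS0, hA, hBv, hCv]
    field_simp
    ring
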